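/- arXiv:1909.13406 — 2 statements merged into one kernel-verified Lean document; each statement's English description precedes it below -/
import Mathlib

section
/- The code T_3 ⊆ 2^{[6]} has an open convex realization in ℝ^3, but has no open convex realization in ℝ^2. -/
/-- The combinatorial code of a collection of sets `U` in `X`: the set of
all `σ ⊆ [n]` such that some point `x ∈ X` lies in exactly the `U i` with `i ∈ σ`. -/
def codeOf {n : ℕ} {X : Type*} (U : Fin n → Set X) : Set (Finset (Fin n)) :=
  {σ | ∃ x : X, ∀ i, i ∈ σ ↔ x ∈ U i}

/-- `C` has a realization by convex open sets in `ℝ^d`. -/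
def HasOpenRealization (n : ℕ) (C : Set (Finset (Fin n))) (d : ℕ) : Prop :=
  ∃ U : Fin n → Set (EuclideanSpace ℝ (Fin d)),
    (∀ i, Convex ℝ (U i)) ∧ (∀ i, IsOpen (U i)) ∧ codeOf U = C

/-- The tangled sunflower code `T_n ⊆ 2^{[2n]}` (neurons `0,…,2n-1`, zero-indexed):
codewords are the pairs `{2k, 2k+1}` for `k < n`, the set of even-indexed neurons,
the set of odd-indexed neurons, all singletons, and the empty set. -/
def Tcode (n : ℕ) : Set (Finset (Fin (2*n))) :=
  {σ | (∃ k : Fin n, σ = {⟨2*k.val, by omega⟩, ⟨2*k.val+1, by omega⟩})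
     ∨ σ = Finset.univ.filter (fun i => i.val % 2 = 0)
     ∨ σ = Finset.univ.filter (fun i => i.val % 2 = 1)
     ∨ (∃ i, σ = {i})
     ∨ σ = ∅}


section AuxLemmas
open Set

variable {E : Type*} [AddCommGroup E] [Module ℝ E]

lemma tri_mem {p q r x : E} :
    x ∈ convexHull ℝ ({p, q, r} : Set E) ↔
      ∃ a b c : ℝ, 0 ≤ a ∧ 0 ≤ b ∧ 0 ≤ c ∧ a + b + c = 1 ∧ x = a • p + b • q + c • r := by
  constructor
  · intro hx
    rw [convexHull_insert ⟨q, by simp⟩, convexHull_pair] at hx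
    rw [mem_convexJoin] at hx
    obtain ⟨p', hp', y, hy, hxseg⟩ := hx
    rw [mem_singleton_iff] at hp'
    subst hp'
    obtain ⟨c₁, c₂, hc₁, hc₂, hc, hyeq⟩ := hy
    obtain ⟨a', b', ha', hb', hab', hxeq⟩ := hxseg
    refine ⟨a', b' * c₁, b' * c₂, ha', by positivity, by positivity, ?_, ?_⟩
    · have : b' * c₁ + b' * c₂ = b' := by rw [← mul_add, hc, mul_one]
      linarith
    · rw [← hxeq, ← hyeq]; module
  · rintro ⟨a, b, c, ha, hb, hc, habc, rfl⟩
    by_cases hbc : b + c = 0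
    · have hb0 : b = 0 := by linarith
      have hc0 : c = 0 := by linarith
      have ha1 : a = 1 := by linarith
      rw [hb0, hc0, ha1]
      have : (1:ℝ) • p + (0:ℝ) • q + (0:ℝ) • r = p := by module
      rw [this]
      exact subset_convexHull ℝ _ (by simp)
    · have hbc' : 0 < b + c := lt_of_le_of_ne (by linarith) (Ne.symm hbc)
      rw [convexHull_insert ⟨q, by simp⟩, convexHull_pair, mem_convexJoin]
      refine ⟨p, by simp, (b / (b + c)) • q + (c / (b + c)) • r, ?_, ?_⟩
      · exact ⟨b / (b + c), c / (b + c), by positivity, by positivity,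
          by field_simp, rfl⟩
      · refine ⟨a, b + c, ha, le_of_lt hbc', by linarith, ?_⟩
        rw [smul_add, smul_smul, smul_smul, mul_div_cancel₀ _ (ne_of_gt hbc'),
          mul_div_cancel₀ _ (ne_of_gt hbc'), add_assoc]

lemma seg_split {u v z y : E} (hz : z ∈ segment ℝ u v) (hy : y ∈ segment ℝ u v) :
    y ∈ segment ℝ u z ∨ y ∈ segment ℝ z v := by
  obtain ⟨s₁, s₂, hs₁, hs₂, hs, hzeq⟩ := hz
  obtain ⟨t₁, t₂, ht₁, ht₂, ht, hyeq⟩ := hy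
  rcases le_total t₂ s₂ with hle | hle
  · left
    by_cases hs0 : s₂ = 0
    · have ht0 : t₂ = 0 := le_antisymm (hs0 ▸ hle) ht₂
      have hyu : y = u := by
        rw [← hyeq, ht0, show t₁ = 1 by linarith]; module
      rw [hyu]; exact left_mem_segment ℝ u z
    · have hs2' : 0 < s₂ := lt_of_le_of_ne hs₂ (Ne.symm hs0)
      refine ⟨1 - t₂ / s₂, t₂ / s₂, ?_, by positivity, by ring, ?_⟩
      · have : t₂ / s₂ ≤ 1 := by rw [div_le_one hs2']; exact hle
        linarith
      · rw [← hyeq, ← hzeq, show s₁ = 1 - s₂ by linarith, show t₁ = 1 - t₂ by linarith]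
        match_scalars <;> (try field_simp) <;> (try ring)
  · right
    by_cases hs1 : s₂ = 1
    · have ht1 : t₂ = 1 := by
        have : s₂ = 1 := hs1 ▸ rfl
        linarith
      have hyv : y = v := by
        rw [← hyeq, ht1, show t₁ = 0 by linarith]; module
      rw [hyv]; exact right_mem_segment ℝ z v
    · have hs2' : s₂ < 1 := lt_of_le_of_ne (by linarith) hs1
      have hpos : 0 < 1 - s₂ := by linarith
      refine ⟨(1 - t₂) / (1 - s₂), 1 - (1 - t₂) / (1 - s₂), div_nonneg (by linarith) hpos.le, ?_, by ring, ?_⟩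
      · have : (1 - t₂) / (1 - s₂) ≤ 1 := by
          rw [div_le_one hpos]; linarith
        linarith
      · rw [← hyeq, ← hzeq, show s₁ = 1 - s₂ by linarith, show t₁ = 1 - t₂ by linarith]
        match_scalars <;> (try field_simp) <;> (try ring)

lemma hull_collinear {x y z : E} (h : Collinear ℝ ({x, y, z} : Set E)) :
    convexHull ℝ ({x, y, z} : Set E) ⊆
      segment ℝ x y ∪ segment ℝ x z ∪ segment ℝ y z := by
  rcases h.wbtw_or_wbtw_or_wbtw with hb | hb | hb
  · intro w hw
    have hsub : convexHull ℝ ({x, y, z} : Set E) ⊆ segment ℝ x z := by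
      apply convexHull_min _ (convex_segment x z)
      intro p hp
      simp only [Set.mem_insert_iff, Set.mem_singleton_iff] at hp
      rcases hp with rfl | rfl | rfl
      · exact left_mem_segment ℝ p z
      · exact hb.mem_segment
      · exact right_mem_segment ℝ x p
    rcases seg_split hb.mem_segment (hsub hw) with h' | h'
    · exact Or.inl (Or.inl h')
    · exact Or.inr h'
  · intro w hw
    have hsub : convexHull ℝ ({x, y, z} : Set E) ⊆ segment ℝ y x := by
      apply convexHull_min _ (convex_segment y x)
      intro p hp
      simp only [Set.mem_insert_iff, Set.mem_singleton_iff] at hp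
      rcases hp with rfl | rfl | rfl
      · exact right_mem_segment ℝ y p
      · exact left_mem_segment ℝ p x
      · exact hb.mem_segment
    rcases seg_split hb.mem_segment (hsub hw) with h' | h'
    · exact Or.inr ((segment_symm ℝ z y) ▸ h')
    · exact Or.inl (Or.inr ((segment_symm ℝ z x) ▸ h'))
  · intro w hw
    have hsub : convexHull ℝ ({x, y, z} : Set E) ⊆ segment ℝ z y := by
      apply convexHull_min _ (convex_segment z y)
      intro p hp
      simp only [Set.mem_insert_iff, Set.mem_singleton_iff] at hp
      rcases hp with rfl | rfl | rfl
      · exact hb.mem_segment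
      · exact right_mem_segment ℝ z p
      · exact left_mem_segment ℝ p y
    rcases seg_split hb.mem_segment (hsub hw) with h' | h'
    · exact Or.inl (Or.inr ((segment_symm ℝ z x) ▸ h'))
    · exact Or.inl (Or.inl h')

lemma combo_unique {p₀ p₁ p₂ : E} (hli : LinearIndependent ℝ ![p₁ - p₀, p₂ - p₀])
    {a₀ a₁ a₂ b₀ b₁ b₂ : ℝ} (hsa : a₀ + a₁ + a₂ = 1) (hsb : b₀ + b₁ + b₂ = 1)
    (h : a₀ • p₀ + a₁ • p₁ + a₂ • p₂ = b₀ • p₀ + b₁ • p₁ + b₂ • p₂) :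
    a₀ = b₀ ∧ a₁ = b₁ ∧ a₂ = b₂ := by
  have ha₀ : a₀ = 1 - a₁ - a₂ := by linarith
  have hb₀ : b₀ = 1 - b₁ - b₂ := by linarith
  rw [ha₀, hb₀] at h
  have key : (a₁ - b₁) • (p₁ - p₀) + (a₂ - b₂) • (p₂ - p₀) = 0 := by
    linear_combination (norm := module) h
  have h2 := linearIndependent_iff'.1 hli Finset.univ ![a₁ - b₁, a₂ - b₂] ?_
  · have e1 := h2 0 (Finset.mem_univ _)
    have e2 := h2 1 (Finset.mem_univ _)
    simp only [Matrix.cons_val_zero, Matrix.cons_val_one, Matrix.head_cons] at e1 e2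
    have e1' : a₁ = b₁ := by linarith [sub_eq_zero.1 e1]
    have e2' : a₂ = b₂ := by linarith [sub_eq_zero.1 e2]
    exact ⟨by rw [ha₀, hb₀, e1', e2'], e1', e2'⟩
  · rw [Fin.sum_univ_two]
    simpa using key

lemma subdiv {p : Fin 3 → E} {a m : Fin 3 → ℝ} (ha : ∀ k, 0 ≤ a k) (hm : ∀ k, 0 ≤ m k)
    (hsa : a 0 + a 1 + a 2 = 1) (hsm : m 0 + m 1 + m 2 = 1)
    {α β : E} (hα : α = a 0 • p 0 + a 1 • p 1 + a 2 • p 2)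
    (hβ : β = m 0 • p 0 + m 1 • p 1 + m 2 • p 2) :
    ∃ (l : Fin 3) (r : ℝ) (c : Fin 3 → ℝ), 0 ≤ r ∧ (∀ k, 0 ≤ c k) ∧ c l = 0 ∧
      r + c 0 + c 1 + c 2 = 1 ∧ β = r • α + c 0 • p 0 + c 1 • p 1 + c 2 • p 2 := by
  have hne : (Finset.univ.filter fun k : Fin 3 => 0 < a k).Nonempty := by
    by_contra hemp
    rw [Finset.not_nonempty_iff_eq_empty, Finset.filter_eq_empty_iff] at hemp
    have h0 : ∀ k : Fin 3, a k = 0 := fun k =>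
      le_antisymm (not_lt.1 (hemp (Finset.mem_univ k))) (ha k)
    rw [h0 0, h0 1, h0 2] at hsa; norm_num at hsa
  obtain ⟨l, hlmem, hlmin⟩ := Finset.exists_min_image _ (fun k => m k / a k) hne
  rw [Finset.mem_filter] at hlmem
  have hal : 0 < a l := hlmem.2
  set r : ℝ := m l / a l with hr
  have hr0 : 0 ≤ r := div_nonneg (hm l) hal.le
  have hrl : r * a l = m l := by rw [hr]; field_simp
  have hc : ∀ k, r * a k ≤ m k := by
    intro k
    by_cases hk : 0 < a k
    · have := hlmin k (Finset.mem_filter.2 ⟨Finset.mem_univ _, hk⟩)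
      calc r * a k = (m l / a l) * a k := by rw [hr]
        _ ≤ (m k / a k) * a k := by
            apply mul_le_mul_of_nonneg_right this hk.le
        _ = m k := by field_simp
    · have hk0 : a k = 0 := le_antisymm (not_lt.1 hk) (ha k)
      rw [hk0, mul_zero]; exact hm k
  have h2 : r * a 0 + r * a 1 + r * a 2 = r := by
    have : r * (a 0 + a 1 + a 2) = r * 1 := by rw [hsa]
    rw [mul_one] at this
    linarith [this, mul_add r (a 0 + a 1) (a 2), mul_add r (a 0) (a 1)]
  refine ⟨l, r, fun k => m k - r * a k, hr0, fun k => by dsimp only; linarith [hc k], by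
      dsimp only; linarith [hrl], by dsimp only; linarith [h2], ?_⟩
  dsimp only
  rw [hβ, hα]
  module


end AuxLemmas

section Neg
open Set

local notation "E2" => EuclideanSpace ℝ (Fin 2)

abbrev emi (k : Fin 3) : Fin (2*3) := ⟨2*k.val, by omega⟩
abbrev omi (k : Fin 3) : Fin (2*3) := ⟨2*k.val+1, by omega⟩

theorem hs_core {E : Type*} [NormedAddCommGroup E] [NormedSpace ℝ E]
    {S T V : Set E} (hSc : Convex ℝ S) (hTc : Convex ℝ T) (hVc : Convex ℝ V)
    (hSo : IsOpen S) (hTo : IsOpen T) (hVo : IsOpen V)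
    (hST : S ∩ T ⊆ V) (hTV : T ∩ V ⊆ S)
    {c qS qT qV : E} (hc : c ∈ S ∩ T ∩ V)
    (hqS : qS ∈ S) (hqT : qT ∈ T) (hqV : qV ∈ V)
    (hbtw : Wbtw ℝ qS qT qV) (hnotA : qT ∉ S ∩ T ∩ V) : False := by
  obtain ⟨⟨hcS, hcT⟩, hcV⟩ := hc
  set A : Set E := S ∩ T ∩ V with hA
  have hAsub : ∀ {x : E}, x ∈ S → x ∈ T → x ∈ A := by
    intro x hxS hxT
    exact ⟨⟨hxS, hxT⟩, hST ⟨hxS, hxT⟩⟩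
  have hAsub' : ∀ {x : E}, x ∈ T → x ∈ V → x ∈ A := by
    intro x hxT hxV
    exact ⟨⟨hTV ⟨hxT, hxV⟩, hxT⟩, hxV⟩
  have hAo : IsOpen A := ((hSo.inter hTo).inter hVo)
  have hAc : Convex ℝ A := ((hSc.inter hTc).inter hVc)
  have hcA : c ∈ A := ⟨⟨hcS, hcT⟩, hcV⟩
  -- the path from c to qT
  set φ : ℝ → E := fun l => c + l • (qT - c) with hφdef
  have hφc : Continuous φ := by
    exact continuous_const.add (continuous_id.smul continuous_const)
  have hφcombo : ∀ l : ℝ, φ l = (1 - l) • c + l • qT := by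
    intro l; simp only [hφdef]; module
  set J : Set ℝ := {l | l ∈ Icc (0:ℝ) 1 ∧ φ l ∈ A} with hJ
  have hJ0 : (0:ℝ) ∈ J := by
    refine ⟨⟨le_refl _, zero_le_one⟩, ?_⟩
    have : φ 0 = c := by simp [hφdef]
    rw [this]; exact hcA
  have hJne : J.Nonempty := ⟨0, hJ0⟩
  have hJbdd : BddAbove J := by
    refine ⟨1, ?_⟩; rintro l ⟨⟨_, hl1⟩, _⟩; exact hl1
  set l₀ : ℝ := sSup J with hl₀
  have hl₀0 : 0 ≤ l₀ := le_csSup hJbdd hJ0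
  have hl₀1 : l₀ ≤ 1 := csSup_le hJne (fun l hl => hl.1.2)
  set m : E := φ l₀ with hm
  have hmclA : m ∈ closure A := by
    refine map_mem_closure (f := φ) (t := A) hφc (csSup_mem_closure hJne hJbdd) ?_
    intro l hl; exact hl.2
  have hmT : m ∈ T := by
    rw [hm, hφcombo]
    exact hTc hcT hqT (by linarith) hl₀0 (by ring)
  have hqTA : qT ∉ A := hnotA
  have hmA : m ∉ A := by
    intro hmA
    have hopen : IsOpen {l : ℝ | φ l ∈ A} := hAo.preimage hφc
    rcases eq_or_lt_of_le hl₀1 with h1 | h1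
    · apply hqTA
      have : φ 1 = qT := by simp [hφdef]
      rw [← this, ← h1] ; exact hmA
    · rcases Metric.isOpen_iff.1 hopen l₀ hmA with ⟨δ, hδ0, hδ⟩
      have hlt : l₀ < min (l₀ + δ/2) 1 := by
        apply lt_min (by linarith) h1
      have hmem : min (l₀ + δ/2) 1 ∈ J := by
        refine ⟨⟨by positivity, min_le_right _ _⟩, ?_⟩
        apply hδ
        rw [Real.ball_eq_Ioo]
        constructor
        · calc l₀ - δ < l₀ := by linarith
            _ < _ := hlt
        · calc min (l₀ + δ/2) 1 ≤ l₀ + δ/2 := min_le_left _ _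
            _ < l₀ + δ := by linarith
      have := le_csSup hJbdd hmem
      rw [← hl₀] at this
      exact absurd this (not_le.2 hlt)
  have hmS : m ∉ S := fun hmS => hmA (hAsub hmS hmT)
  have hmV : m ∉ V := fun hmV => hmA (hAsub' hmT hmV)
  -- images of qS, qV under the homothety
  set u : E := c + l₀ • (qS - c) with hu
  set w : E := c + l₀ • (qV - c) with hw
  have huS : u ∈ S := by
    have : u = (1 - l₀) • c + l₀ • qS := by rw [hu]; module
    rw [this]; exact hSc hcS hqS (by linarith) hl₀0 (by ring)
  have hwV : w ∈ V := by
    have : w = (1 - l₀) • c + l₀ • qV := by rw [hw]; module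
    rw [this]; exact hVc hcV hqV (by linarith) hl₀0 (by ring)
  -- m is a convex combination of u and w
  obtain ⟨a, b, ha, hb, hab, habm⟩ := mem_segment_iff_wbtw.2 hbtw
  have hmuw : m = a • u + b • w := by
    rw [hm, hφcombo, hu, hw, ← habm, show b = 1 - a from by linarith]
    module
  have ha0 : a ≠ 0 := by
    intro h0
    apply hmV
    have : m = w := by rw [hmuw, h0, show b = 1 from by linarith]; module
    rw [this]; exact hwV
  have hb0 : b ≠ 0 := by
    intro h0
    apply hmS
    have : m = u := by rw [hmuw, h0, show a = 1 from by linarith]; module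
    rw [this]; exact huS
  have ha' : 0 < a := lt_of_le_of_ne ha (Ne.symm ha0)
  have hb'' : 0 < b := lt_of_le_of_ne hb (Ne.symm hb0)
  -- key cancellation : a • (u - m) + b • (w - m) = 0
  have hzero : a • (u - m) + b • (w - m) = 0 := by
    rw [hmuw, show b = 1 - a from by linarith]; module
  -- pick points close to m on the segments towards u and w
  obtain ⟨ε, hε0, hball⟩ := Metric.isOpen_iff.1 hTo m hmT
  have hmu : u ≠ m := fun h => hmS (h ▸ huS)
  have hmw : w ≠ m := fun h => hmV (h ▸ hwV)
  set d₁ : ℝ := min (ε / (2 * (‖u - m‖ + 1))) (1/2) with hd₁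
  set d₂ : ℝ := min (ε / (2 * (‖w - m‖ + 1))) (1/2) with hd₂
  have hnorm1 : (0:ℝ) < ‖u - m‖ + 1 := by positivity
  have hnorm2 : (0:ℝ) < ‖w - m‖ + 1 := by positivity
  have hd₁0 : 0 < d₁ := lt_min (by positivity) (by norm_num)
  have hd₂0 : 0 < d₂ := lt_min (by positivity) (by norm_num)
  have hd₁1 : d₁ < 1 := lt_of_le_of_lt (min_le_right _ _) (by norm_num)
  have hd₂1 : d₂ < 1 := lt_of_le_of_lt (min_le_right _ _) (by norm_num)
  set x₁ : E := m + d₁ • (u - m) with hx₁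
  set x₂ : E := m + d₂ • (w - m) with hx₂
  have hdist1 : dist x₁ m < ε := by
    rw [hx₁, dist_eq_norm]
    have : m + d₁ • (u - m) - m = d₁ • (u - m) := by module
    rw [this, norm_smul, Real.norm_eq_abs, abs_of_pos hd₁0]
    calc d₁ * ‖u - m‖ ≤ (ε / (2 * (‖u - m‖ + 1))) * ‖u - m‖ := by
          apply mul_le_mul_of_nonneg_right (min_le_left _ _) (norm_nonneg _)
      _ < ε := by
          rw [div_mul_eq_mul_div, div_lt_iff₀ (by positivity)]
          nlinarith [norm_nonneg (u - m), hε0]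
  have hdist2 : dist x₂ m < ε := by
    rw [hx₂, dist_eq_norm]
    have : m + d₂ • (w - m) - m = d₂ • (w - m) := by module
    rw [this, norm_smul, Real.norm_eq_abs, abs_of_pos hd₂0]
    calc d₂ * ‖w - m‖ ≤ (ε / (2 * (‖w - m‖ + 1))) * ‖w - m‖ := by
          apply mul_le_mul_of_nonneg_right (min_le_left _ _) (norm_nonneg _)
      _ < ε := by
          rw [div_mul_eq_mul_div, div_lt_iff₀ (by positivity)]
          nlinarith [norm_nonneg (w - m), hε0]
  have hx₁T : x₁ ∈ T := hball (Metric.mem_ball.2 hdist1)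
  have hx₂T : x₂ ∈ T := hball (Metric.mem_ball.2 hdist2)
  have hx₁S : x₁ ∈ S := by
    have hsub := hSc.openSegment_interior_closure_subset_interior
      (x := u) (y := m) (by rw [hSo.interior_eq]; exact huS)
      (closure_mono (fun x hx => hx.1.1) hmclA)
    rw [hSo.interior_eq] at hsub
    apply hsub
    exact ⟨d₁, 1 - d₁, hd₁0, by linarith, by ring, by rw [hx₁]; module⟩
  have hx₂V : x₂ ∈ V := by
    have hsub := hVc.openSegment_interior_closure_subset_interior
      (x := w) (y := m) (by rw [hVo.interior_eq]; exact hwV)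
      (closure_mono (fun x hx => hx.2) hmclA)
    rw [hVo.interior_eq] at hsub
    apply hsub
    exact ⟨d₂, 1 - d₂, hd₂0, by linarith, by ring, by rw [hx₂]; module⟩
  have hx₁A : x₁ ∈ A := hAsub hx₁S hx₁T
  have hx₂A : x₂ ∈ A := hAsub' hx₂T hx₂V
  -- m is a convex combination of x₁ and x₂
  set D : ℝ := d₁ * b + d₂ * a with hD
  have hD0 : 0 < D := by positivity
  have hcombo : (d₂ * a / D) • x₁ + (d₁ * b / D) • x₂ = m := by
    have hDkey : (d₂ * a) • x₁ + (d₁ * b) • x₂ = D • m := by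
      rw [hx₁, hx₂, hD]
      have expand : (d₂ * a) • (m + d₁ • (u - m)) + (d₁ * b) • (m + d₂ • (w - m))
          = (d₂ * a + d₁ * b) • m + (d₁ * d₂) • (a • (u - m) + b • (w - m)) := by
        module
      rw [expand, hzero]
      module
    have h2 := congrArg (fun v : E => D⁻¹ • v) hDkey
    simp only [smul_add, smul_smul] at h2
    rw [inv_mul_cancel₀ (ne_of_gt hD0), one_smul] at h2
    calc (d₂ * a / D) • x₁ + (d₁ * b / D) • x₂
        = (D⁻¹ * (d₂ * a)) • x₁ + (D⁻¹ * (d₁ * b)) • x₂ := by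
          rw [div_eq_inv_mul, div_eq_inv_mul]
      _ = m := h2
  have hmA' : m ∈ A := by
    have hc1 : 0 ≤ d₂ * a / D := div_nonneg (mul_nonneg hd₂0.le ha) hD0.le
    have hc2 : 0 ≤ d₁ * b / D := div_nonneg (mul_nonneg hd₁0.le hb) hD0.le
    have hcsum : d₂ * a / D + d₁ * b / D = 1 := by
      rw [← add_div, hD, div_eq_one_iff_eq (ne_of_gt hD0)]; ring
    have hseg : m ∈ segment ℝ x₁ x₂ := ⟨d₂ * a / D, d₁ * b / D, hc1, hc2, hcsum, hcombo⟩
    exact hAc.segment_subset hx₁A hx₂A hseg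
  exact hmA hmA'


theorem sgen {S T V : Set (EuclideanSpace ℝ (Fin 2))}
    (hSc : Convex ℝ S) (hTc : Convex ℝ T) (hVc : Convex ℝ V)
    (hSo : IsOpen S) (hTo : IsOpen T) (hVo : IsOpen V)
    (hST : S ∩ T ⊆ V) (hTV : T ∩ V ⊆ S) (hVS : V ∩ S ⊆ T)
    {c xS xT xV : EuclideanSpace ℝ (Fin 2)}
    (hc : c ∈ S ∩ T ∩ V) (hxS : xS ∈ S) (hxT : xT ∈ T) (hxV : xV ∈ V) :
    ∃ y, y ∈ S ∩ T ∩ V ∧ y ∈ convexHull ℝ ({xS, xT, xV} : Set (EuclideanSpace ℝ (Fin 2))) := by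
  by_contra hcon
  push_neg at hcon
  have hAc : Convex ℝ (S ∩ T ∩ V) := (hSc.inter hTc).inter hVc
  have hAo : IsOpen (S ∩ T ∩ V) := (hSo.inter hTo).inter hVo
  have hdisj : Disjoint (S ∩ T ∩ V) (convexHull ℝ ({xS, xT, xV} : Set (EuclideanSpace ℝ (Fin 2)))) := by
    rw [Set.disjoint_left]; intro y hy hy'; exact hcon y hy hy'
  obtain ⟨f, u, hfa, hfb⟩ :=
    geometric_hahn_banach_open hAc hAo (convex_convexHull ℝ _) hdisj
  have hfc : f c < u := hfa c hc
  -- crossing points on the level set {f = u}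
  have cross : ∀ {W : Set (EuclideanSpace ℝ (Fin 2))} {x : EuclideanSpace ℝ (Fin 2)},
      Convex ℝ W → c ∈ W → x ∈ W → x ∈ ({xS, xT, xV} : Set (EuclideanSpace ℝ (Fin 2))) →
      ∃ q, q ∈ W ∧ f q = u := by
    intro W x hW hcW hxW hxmem
    have hfx : u ≤ f x := hfb x (subset_convexHull ℝ _ hxmem)
    set g : ℝ → ℝ := fun t => f ((1 - t) • c + t • x) with hg
    have hgc : ContinuousOn g (Icc 0 1) := by
      apply Continuous.continuousOn
      apply f.continuous.comp
      exact ((continuous_const.sub continuous_id).smul continuous_const).add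
        (continuous_id.smul continuous_const)
    have hg0 : g 0 = f c := by simp [hg]
    have hg1 : g 1 = f x := by simp [hg]
    have hu : u ∈ Icc (g 0) (g 1) := by rw [hg0, hg1]; exact ⟨le_of_lt hfc, hfx⟩
    obtain ⟨t, ht, hgt⟩ := intermediate_value_Icc zero_le_one hgc hu
    exact ⟨(1 - t) • c + t • x, hW hcW hxW (by linarith [ht.2]) ht.1 (by ring), hgt⟩
  obtain ⟨qS, hqSS, hqSu⟩ := cross hSc hc.1.1 hxS (by simp)
  obtain ⟨qT, hqTT, hqTu⟩ := cross hTc hc.1.2 hxT (by simp)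
  obtain ⟨qV, hqVV, hqVu⟩ := cross hVc hc.2 hxV (by simp)
  -- not in the core
  have hnotA : ∀ {q : EuclideanSpace ℝ (Fin 2)}, f q = u → q ∉ S ∩ T ∩ V := by
    intro q hq hmem
    exact absurd (hfa q hmem) (by rw [hq]; exact lt_irrefl u)
  -- the three crossing points are collinear
  have hker : ∀ {y : EuclideanSpace ℝ (Fin 2)}, f y = u → f (y - qS) = 0 := by
    intro y hy; rw [map_sub, hy, hqSu, sub_self]
  have hcol : Collinear ℝ ({qS, qT, qV} : Set (EuclideanSpace ℝ (Fin 2))) := by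
    have hfv₀ : f (xS - c) ≠ 0 := by
      rw [map_sub]
      have := hfb xS (subset_convexHull ℝ _ (by simp))
      intro h; linarith [sub_eq_zero.1 h ▸ hfc]
    have hnli : ¬ LinearIndependent ℝ ![qT - qS, qV - qS] := by
      intro hli
      have hcard : Module.finrank ℝ
          ↥(Submodule.span ℝ (range ![qT - qS, qV - qS])) = 2 := by
        rw [finrank_span_eq_card hli]; simp
      have hspan : Submodule.span ℝ (range ![qT - qS, qV - qS]) = ⊤ :=
        Submodule.eq_top_of_finrank_eq (by rw [hcard, finrank_euclideanSpace_fin])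
      have hle : Submodule.span ℝ (range ![qT - qS, qV - qS]) ≤ LinearMap.ker (f : E2 →ₗ[ℝ] ℝ) := by
        rw [Submodule.span_le]
        rintro y ⟨i, rfl⟩
        fin_cases i
        · exact LinearMap.mem_ker.2 (hker hqTu)
        · exact LinearMap.mem_ker.2 (hker hqVu)
      rw [hspan] at hle
      exact hfv₀ (hle (Submodule.mem_top))
    rw [linearIndependent_fin2] at hnli
    push_neg at hnli
    simp only [Matrix.cons_val_one, Matrix.head_cons, Matrix.cons_val_zero] at hnli
    by_cases hz : qV - qS = 0
    · have hVSeq : qV = qS := by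
        have := sub_eq_zero.1 hz; exact this
      have hsub : ({qS, qT, qV} : Set (EuclideanSpace ℝ (Fin 2))) ⊆ {qS, qT} := by
        rw [hVSeq]; intro p hp
        rcases hp with h | h | h
        · exact Or.inl h
        · exact Or.inr h
        · exact Or.inl h
      exact (collinear_pair ℝ qS qT).subset hsub
    · obtain ⟨a, haz⟩ := hnli hz
      rw [collinear_iff_of_mem (show qS ∈ ({qS, qT, qV} : Set (EuclideanSpace ℝ (Fin 2))) by simp)]
      refine ⟨qV - qS, ?_⟩
      intro p hp
      rcases hp with h | h | h
      · exact ⟨0, by rw [h]; simp⟩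
      · refine ⟨a, ?_⟩
        rw [h, haz]
        simp [vadd_eq_add]
      · exact ⟨1, by rw [h]; simp [vadd_eq_add]⟩
  rcases hcol.wbtw_or_wbtw_or_wbtw with hb | hb | hb
  · exact hs_core hSc hTc hVc hSo hTo hVo hST hTV hc hqSS hqTT hqVV hb (hnotA hqTu)
  · have hc' : c ∈ T ∩ V ∩ S := ⟨⟨hc.1.2, hc.2⟩, hc.1.1⟩
    exact hs_core hTc hVc hSc hTo hVo hSo hTV hVS hc' hqTT hqVV hqSS hb (fun hm => hnotA hqVu ⟨⟨hm.2, hm.1.1⟩, hm.1.2⟩)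
  · have hc' : c ∈ V ∩ S ∩ T := ⟨⟨hc.2, hc.1.1⟩, hc.1.2⟩
    exact hs_core hVc hSc hTc hVo hSo hTo hVS hST hc' hqVV hqSS hqTT hb (fun hm => hnotA hqSu ⟨⟨hm.1.2, hm.2⟩, hm.1.1⟩)


lemma exit_point {α pi pj β q : EuclideanSpace ℝ (Fin 2)}
    (hli : LinearIndependent ℝ ![pi - α, pj - α])
    (hβ : β ∈ convexHull ℝ ({α, pi, pj} : Set (EuclideanSpace ℝ (Fin 2))))
    (hq : q ∉ convexHull ℝ ({α, pi, pj} : Set (EuclideanSpace ℝ (Fin 2)))) :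
    ∃ z, z ∈ segment ℝ β q ∧
      (z ∈ segment ℝ α pi ∨ z ∈ segment ℝ α pj ∨ z ∈ segment ℝ pi pj) := by
  have hspan : ⊤ ≤ Submodule.span ℝ (range ![pi - α, pj - α]) := by
    refine le_of_eq (Submodule.eq_top_of_finrank_eq ?_).symm
    rw [finrank_span_eq_card hli, finrank_euclideanSpace_fin]
    simp
  set b : Module.Basis (Fin 2) ℝ (EuclideanSpace ℝ (Fin 2)) := Module.Basis.mk hli hspan with hbdef
  have hb0 : b 0 = pi - α := by rw [hbdef, Module.Basis.coe_mk]; rfl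
  have hb1 : b 1 = pj - α := by rw [hbdef, Module.Basis.coe_mk]; rfl
  set w1 : EuclideanSpace ℝ (Fin 2) → ℝ := fun x => b.repr (x - α) 0 with hw1def
  set w2 : EuclideanSpace ℝ (Fin 2) → ℝ := fun x => b.repr (x - α) 1 with hw2def
  -- representation identity
  have hvec : ∀ x : EuclideanSpace ℝ (Fin 2),
      x - α = w1 x • (pi - α) + w2 x • (pj - α) := by
    intro x
    have hs := b.sum_repr (x - α)
    rw [Fin.sum_univ_two, hb0, hb1] at hs
    exact hs.symm
  have hxid : ∀ x : EuclideanSpace ℝ (Fin 2),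
      x = (1 - w1 x - w2 x) • α + w1 x • pi + w2 x • pj := by
    intro x
    linear_combination (norm := module) (hvec x)
  -- coordinates of explicit combinations
  have hwcombo : ∀ (x : EuclideanSpace ℝ (Fin 2)) (c1 c2 : ℝ),
      x - α = c1 • (pi - α) + c2 • (pj - α) → w1 x = c1 ∧ w2 x = c2 := by
    intro x c1 c2 hx
    have hrr : b.repr (x - α) = c1 • Finsupp.single 0 1 + c2 • Finsupp.single 1 1 := by
      rw [hx, ← hb0, ← hb1, map_add, map_smul, map_smul, b.repr_self, b.repr_self]
    constructor
    · rw [hw1def]; simp only [hrr, Finsupp.add_apply, Finsupp.smul_apply,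
        Finsupp.single_apply]; norm_num
    · rw [hw2def]; simp only [hrr, Finsupp.add_apply, Finsupp.smul_apply,
        Finsupp.single_apply]; norm_num
  -- membership characterization
  have hfwd : ∀ x : EuclideanSpace ℝ (Fin 2),
      x ∈ convexHull ℝ ({α, pi, pj} : Set (EuclideanSpace ℝ (Fin 2))) →
      0 ≤ w1 x ∧ 0 ≤ w2 x ∧ w1 x + w2 x ≤ 1 := by
    intro x hx
    obtain ⟨a, b', c, ha, hb', hc, habc, hxeq⟩ := tri_mem.1 hx
    have hxa : x - α = b' • (pi - α) + c • (pj - α) := by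
      rw [hxeq, show a = 1 - b' - c by linarith]; module
    obtain ⟨h1, h2⟩ := hwcombo x b' c hxa
    exact ⟨h1 ▸ hb', h2 ▸ hc, by rw [h1, h2]; linarith⟩
  have hbwd : ∀ x : EuclideanSpace ℝ (Fin 2),
      0 ≤ w1 x → 0 ≤ w2 x → w1 x + w2 x ≤ 1 →
      x ∈ convexHull ℝ ({α, pi, pj} : Set (EuclideanSpace ℝ (Fin 2))) := by
    intro x h1 h2 h3
    exact tri_mem.2 ⟨1 - w1 x - w2 x, w1 x, w2 x, by linarith, h1, h2, by ring, hxid x⟩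
  -- the path from β to q and its coordinates
  obtain ⟨hβ1, hβ2, hβ3⟩ := hfwd β hβ
  set g1 : ℝ → ℝ := fun t => (1 - t) * w1 β + t * w1 q with hg1def
  set g2 : ℝ → ℝ := fun t => (1 - t) * w2 β + t * w2 q with hg2def
  have hγw : ∀ t : ℝ, w1 ((1 - t) • β + t • q) = g1 t ∧ w2 ((1 - t) • β + t • q) = g2 t := by
    intro t
    refine hwcombo _ (g1 t) (g2 t) ?_
    rw [hg1def, hg2def]
    simp only
    linear_combination (norm := module) (1 - t) • hvec β + t • hvec q
  have hg1c : Continuous g1 :=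
    ((continuous_const.sub continuous_id).mul continuous_const).add
      (continuous_id.mul continuous_const)
  have hg2c : Continuous g2 :=
    ((continuous_const.sub continuous_id).mul continuous_const).add
      (continuous_id.mul continuous_const)
  set J : Set ℝ := Icc 0 1 ∩ {t | 0 ≤ g1 t} ∩ {t | 0 ≤ g2 t} ∩ {t | g1 t + g2 t ≤ 1}
    with hJdef
  have hJclosed : IsClosed J := by
    refine ((isClosed_Icc.inter ?_).inter ?_).inter ?_
    · exact isClosed_le continuous_const hg1c
    · exact isClosed_le continuous_const hg2c
    · exact isClosed_le (hg1c.add hg2c) continuous_const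
  have hJ0 : (0:ℝ) ∈ J := by
    refine ⟨⟨⟨⟨le_refl _, zero_le_one⟩, ?_⟩, ?_⟩, ?_⟩ <;>
      simp only [hg1def, hg2def, mem_setOf_eq] <;> norm_num <;> linarith
  have hJbdd : BddAbove J := by
    refine ⟨1, ?_⟩; rintro t ⟨⟨⟨⟨_, ht1⟩, _⟩, _⟩, _⟩; exact ht1
  set t₀ : ℝ := sSup J with ht₀def
  have ht₀J : t₀ ∈ J := hJclosed.csSup_mem ⟨0, hJ0⟩ hJbdd
  obtain ⟨⟨⟨⟨ht₀0, ht₀1⟩, hg1t₀⟩, hg2t₀⟩, hsumt₀⟩ := ht₀J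
  simp only [mem_setOf_eq] at hg1t₀ hg2t₀ hsumt₀
  have hq' : (1 - (1:ℝ)) • β + (1:ℝ) • q = q := by module
  have e1 : w1 q = g1 1 := by rw [← hq']; exact (hγw 1).1
  have e2 : w2 q = g2 1 := by rw [← hq']; exact (hγw 1).2
  -- t₀ < 1
  have ht₀lt : t₀ < 1 := by
    rcases eq_or_lt_of_le ht₀1 with h1 | h1
    · exfalso
      apply hq
      apply hbwd
      · rw [e1]; exact h1 ▸ hg1t₀
      · rw [e2]; exact h1 ▸ hg2t₀
      · rw [e1, e2]; exact h1 ▸ hsumt₀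
    · exact h1
  -- at t₀ one of the constraints is tight
  have htight : g1 t₀ = 0 ∨ g2 t₀ = 0 ∨ g1 t₀ + g2 t₀ = 1 := by
    by_contra hcon
    push_neg at hcon
    obtain ⟨hc1, hc2, hc3⟩ := hcon
    have hs1 : 0 < g1 t₀ := lt_of_le_of_ne hg1t₀ (Ne.symm hc1)
    have hs2 : 0 < g2 t₀ := lt_of_le_of_ne hg2t₀ (Ne.symm hc2)
    have hs3 : g1 t₀ + g2 t₀ < 1 := lt_of_le_of_ne hsumt₀ hc3
    have hopen : IsOpen ({t : ℝ | 0 < g1 t} ∩ {t | 0 < g2 t} ∩ {t | g1 t + g2 t < 1}) := by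
      refine (IsOpen.inter (IsOpen.inter ?_ ?_) ?_)
      · exact isOpen_lt continuous_const hg1c
      · exact isOpen_lt continuous_const hg2c
      · exact isOpen_lt (hg1c.add hg2c) continuous_const
    obtain ⟨δ, hδ0, hδ⟩ := Metric.isOpen_iff.1 hopen t₀ ⟨⟨hs1, hs2⟩, hs3⟩
    set t' : ℝ := min (t₀ + δ/2) 1 with ht'def
    have ht'gt : t₀ < t' := lt_min (by linarith) ht₀lt
    have ht'ball : t' ∈ Metric.ball t₀ δ := by
      rw [Real.ball_eq_Ioo]
      constructor
      · calc t₀ - δ < t₀ := by linarith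
          _ < t' := ht'gt
      · calc t' ≤ t₀ + δ/2 := min_le_left _ _
          _ < t₀ + δ := by linarith
    obtain ⟨⟨hb1', hb2'⟩, hb3'⟩ := hδ ht'ball
    simp only [mem_setOf_eq] at hb1' hb2' hb3'
    have ht'J : t' ∈ J := by
      refine ⟨⟨⟨⟨?_, min_le_right _ _⟩, ?_⟩, ?_⟩, ?_⟩
      · positivity
      · exact le_of_lt hb1'
      · exact le_of_lt hb2'
      · exact le_of_lt hb3'
    have := le_csSup hJbdd ht'J
    rw [← ht₀def] at this
    exact absurd this (not_le.2 ht'gt)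
  -- the exit point
  refine ⟨(1 - t₀) • β + t₀ • q, ⟨1 - t₀, t₀, by linarith, ht₀0, by ring, rfl⟩, ?_⟩
  set z : EuclideanSpace ℝ (Fin 2) := (1 - t₀) • β + t₀ • q with hzdef
  have hz1 : w1 z = g1 t₀ := (hγw t₀).1
  have hz2 : w2 z = g2 t₀ := (hγw t₀).2
  have hzid := hxid z
  rcases htight with h | h | h
  · -- w1 z = 0 : z on [α, pj]
    right; left
    have hzw1 : w1 z = 0 := by rw [hz1]; exact h
    have hzeq : z = (1 - w2 z) • α + w2 z • pj := by
      linear_combination (norm := module) hxid z + hzw1 • (pi - α)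
    exact ⟨1 - w2 z, w2 z, by rw [hz2]; linarith, by rw [hz2]; exact hg2t₀, by ring, hzeq.symm⟩
  · -- w2 z = 0 : z on [α, pi]
    left
    have hzw2 : w2 z = 0 := by rw [hz2]; exact h
    have hzeq : z = (1 - w1 z) • α + w1 z • pi := by
      linear_combination (norm := module) hxid z + hzw2 • (pj - α)
    exact ⟨1 - w1 z, w1 z, by rw [hz1]; linarith, by rw [hz1]; exact hg1t₀, by ring, hzeq.symm⟩
  · -- sum = 1 : z on [pi, pj]
    right; right
    have hzsum : 1 - w1 z - w2 z = 0 := by rw [hz1, hz2]; linarith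
    have hzeq : z = w1 z • pi + w2 z • pj := by
      linear_combination (norm := module) hxid z + hzsum • α
    exact ⟨w1 z, w2 z, by rw [hz1]; exact hg1t₀, by rw [hz2]; exact hg2t₀,
      by rw [hz1, hz2]; exact h, hzeq.symm⟩


lemma same_side {Ue Uo : Fin 3 → Set E2}
    (hUec : ∀ k, Convex ℝ (Ue k))
    (hcross : ∀ j k : Fin 3, j ≠ k → ∀ x : E2, x ∈ Ue j → x ∈ Uo k → False)
    {P : Fin 3 → E2} (hPe : ∀ k, P k ∈ Ue k)
    {α' β' : E2} (hαe : ∀ k, α' ∈ Ue k) (hβo : ∀ k, β' ∈ Uo k)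
    {i j : Fin 3} (hij : i ≠ j)
    (hα : α' ∈ segment ℝ (P i) (P j)) (hβ : β' ∈ segment ℝ (P i) (P j)) : False := by
  rcases seg_split hα hβ with h | h
  · exact hcross i j hij β' ((hUec i).segment_subset (hPe i) (hαe i) h) (hβo j)
  · exact hcross j i hij.symm β' ((hUec j).segment_subset (hαe j) (hPe j) h) (hβo i)

lemma cross_side {Ue Uo : Fin 3 → Set E2}
    (hUec : ∀ k, Convex ℝ (Ue k)) (hUoc : ∀ k, Convex ℝ (Uo k))
    (hcross : ∀ j k : Fin 3, j ≠ k → ∀ x : E2, x ∈ Ue j → x ∈ Uo k → False)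
    {P : Fin 3 → E2} (hPe : ∀ k, P k ∈ Ue k) (hPo : ∀ k, P k ∈ Uo k)
    {α' β' : E2} (hαe : ∀ k, α' ∈ Ue k) (hβo : ∀ k, β' ∈ Uo k)
    {i j l : Fin 3} (hjl : j ≠ l)
    (hβ : β' ∈ segment ℝ (P i) (P j)) (hα : α' ∈ segment ℝ (P i) (P l)) : False := by
  obtain ⟨s1, s2, hs1, hs2, hs, hβeq⟩ := hβ
  obtain ⟨r1, r2, hr1, hr2, hr, hαeq⟩ := hα
  by_cases hs2e : s2 = 1
  · have hb : β' = P j := by rw [← hβeq, hs2e, show s1 = 0 by linarith]; module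
    exact hcross j l hjl β' (by rw [hb]; exact hPe j) (hβo l)
  by_cases hr2e : r2 = 1
  · have hba : α' = P l := by rw [← hαeq, hr2e, show r1 = 0 by linarith]; module
    exact hcross j l hjl α' (hαe j) (by rw [hba]; exact hPo l)
  have hs2lt : s2 < 1 := lt_of_le_of_ne (by linarith) hs2e
  have hr2lt : r2 < 1 := lt_of_le_of_ne (by linarith) hr2e
  have hD : 0 < 1 - r2 * s2 := by nlinarith
  have hDne : (1 - r2 * s2) ≠ 0 := ne_of_gt hD
  set t : ℝ := r2 * (1 - s2) / (1 - r2 * s2) with htdef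
  set u : ℝ := s2 * (1 - r2) / (1 - r2 * s2) with hudef
  have ht0 : 0 ≤ t := div_nonneg (mul_nonneg hr2 (by linarith)) hD.le
  have ht1 : t ≤ 1 := by rw [htdef, div_le_one hD]; nlinarith
  have hu0 : 0 ≤ u := div_nonneg (mul_nonneg hs2 (by linarith)) hD.le
  have hu1 : u ≤ 1 := by rw [hudef, div_le_one hD]; nlinarith
  have hxeq : (1 - t) • β' + t • P l = (1 - u) • α' + u • P j := by
    rw [← hβeq, ← hαeq, show s1 = 1 - s2 by linarith, show r1 = 1 - r2 by linarith,
      htdef, hudef]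
    match_scalars <;> field_simp <;> ring
  have hx1 : (1 - t) • β' + t • P l ∈ Uo l :=
    (hUoc l).segment_subset (hβo l) (hPo l) ⟨1 - t, t, by linarith, ht0, by ring, rfl⟩
  have hx2 : (1 - u) • α' + u • P j ∈ Ue j :=
    (hUec j).segment_subset (hαe j) (hPe j) ⟨1 - u, u, by linarith, hu0, by ring, rfl⟩
  rw [hxeq] at hx1
  exact hcross j l hjl _ hx2 hx1


lemma interior_contra {Ue Uo : Fin 3 → Set E2}
    (hUec : ∀ k, Convex ℝ (Ue k)) (hUoc : ∀ k, Convex ℝ (Uo k))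
    (hcross : ∀ j k : Fin 3, j ≠ k → ∀ x : E2, x ∈ Ue j → x ∈ Uo k → False)
    {P : Fin 3 → E2} (hPe : ∀ k, P k ∈ Ue k) (hPo : ∀ k, P k ∈ Uo k)
    {α β : E2} (hαe : ∀ k, α ∈ Ue k) (hβo : ∀ k, β ∈ Uo k)
    {i j l : Fin 3} (hil : i ≠ l) (hjl : j ≠ l)
    (hβK : β ∈ convexHull ℝ ({α, P i, P j} : Set E2))
    (hPlK : P l ∉ convexHull ℝ ({α, P i, P j} : Set E2))
    (hside : ∀ z : E2, z ∈ segment ℝ β (P l) → z ∉ segment ℝ (P i) (P j)) : False := by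
  by_cases hli : LinearIndependent ℝ ![P i - α, P j - α]
  · obtain ⟨z, hzseg, hzcases⟩ := exit_point hli hβK hPlK
    have hzUol : z ∈ Uo l := (hUoc l).segment_subset (hβo l) (hPo l) hzseg
    rcases hzcases with h | h | h
    · exact hcross i l hil z ((hUec i).segment_subset (hαe i) (hPe i) h) hzUol
    · exact hcross j l hjl z ((hUec j).segment_subset (hαe j) (hPe j) h) hzUol
    · exact hside z hzseg h
  · have hcol : Collinear ℝ ({α, P i, P j} : Set E2) := by
      rw [linearIndependent_fin2] at hli
      push_neg at hli
      simp only [Matrix.cons_val_one, Matrix.head_cons, Matrix.cons_val_zero] at hli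
      by_cases hz : P j - α = 0
      · have hPjα : P j = α := by
          have := sub_eq_zero.1 hz; exact this
        refine (collinear_pair ℝ α (P i)).subset ?_
        intro p hp
        simp only [Set.mem_insert_iff, Set.mem_singleton_iff] at hp
        rcases hp with rfl | rfl | rfl
        · exact Or.inl rfl
        · exact Or.inr rfl
        · rw [hPjα]; exact Or.inl rfl
      · obtain ⟨a, haz⟩ := hli hz
        rw [collinear_iff_of_mem (show α ∈ ({α, P i, P j} : Set E2) by simp)]
        refine ⟨P j - α, ?_⟩
        intro p hp
        simp only [Set.mem_insert_iff, Set.mem_singleton_iff] at hp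
        rcases hp with rfl | rfl | rfl
        · exact ⟨0, by simp⟩
        · exact ⟨a, by rw [haz]; simp [vadd_eq_add]⟩
        · exact ⟨1, by simp [vadd_eq_add]⟩
    rcases hull_collinear hcol hβK with (h | h) | h
    · exact hcross i l hil β ((hUec i).segment_subset (hαe i) (hPe i) h) (hβo l)
    · exact hcross j l hjl β ((hUec j).segment_subset (hαe j) (hPe j) h) (hβo l)
    · exact hside β (left_mem_segment ℝ β (P l)) h


lemma subdiv' {E : Type*} [AddCommGroup E] [Module ℝ E]
    {p₀ p₁ p₂ α β : E} {a₀ a₁ a₂ m₀ m₁ m₂ : ℝ}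
    (ha₀ : 0 ≤ a₀) (ha₁ : 0 ≤ a₁) (ha₂ : 0 ≤ a₂)
    (hm₀ : 0 ≤ m₀) (hm₁ : 0 ≤ m₁) (hm₂ : 0 ≤ m₂)
    (hsa : a₀ + a₁ + a₂ = 1) (hsm : m₀ + m₁ + m₂ = 1)
    (hα : α = a₀ • p₀ + a₁ • p₁ + a₂ • p₂)
    (hβ : β = m₀ • p₀ + m₁ • p₁ + m₂ • p₂) :
    ∃ r c₀ c₁ c₂ : ℝ, 0 ≤ r ∧ 0 ≤ c₀ ∧ 0 ≤ c₁ ∧ 0 ≤ c₂ ∧ r + c₀ + c₁ + c₂ = 1 ∧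
      β = r • α + c₀ • p₀ + c₁ • p₁ + c₂ • p₂ ∧ (c₀ = 0 ∨ c₁ = 0 ∨ c₂ = 0) := by
  obtain ⟨l, r, c, hr0, hc, hcl, hsum, heq⟩ :=
    subdiv (p := ![p₀, p₁, p₂]) (a := ![a₀, a₁, a₂]) (m := ![m₀, m₁, m₂])
      (by intro k; fin_cases k <;> assumption)
      (by intro k; fin_cases k <;> assumption)
      hsa hsm hα hβ
  refine ⟨r, c 0, c 1, c 2, hr0, hc 0, hc 1, hc 2, hsum, heq, ?_⟩
  fin_cases l
  · exact Or.inl hcl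
  · exact Or.inr (Or.inl hcl)
  · exact Or.inr (Or.inr hcl)

set_option maxHeartbeats 2000000 in
lemma interior_full {Ue Uo : Fin 3 → Set E2}
    (hUec : ∀ k, Convex ℝ (Ue k)) (hUoc : ∀ k, Convex ℝ (Uo k))
    (hcross : ∀ j k : Fin 3, j ≠ k → ∀ x : E2, x ∈ Ue j → x ∈ Uo k → False)
    {P : Fin 3 → E2} (hPe : ∀ k, P k ∈ Ue k) (hPo : ∀ k, P k ∈ Uo k)
    {α β : E2} (hαe : ∀ k, α ∈ Ue k) (hβo : ∀ k, β ∈ Uo k)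
    (hliP : LinearIndependent ℝ ![P 1 - P 0, P 2 - P 0])
    {a₀ a₁ a₂ m₀ m₁ m₂ : ℝ}
    (ha₀ : 0 ≤ a₀) (ha₁ : 0 ≤ a₁) (ha₂ : 0 ≤ a₂)
    (hm₀ : 0 < m₀) (hm₁ : 0 < m₁) (hm₂ : 0 < m₂)
    (hsa : a₀ + a₁ + a₂ = 1) (hsm : m₀ + m₁ + m₂ = 1)
    (hαeq : α = a₀ • P 0 + a₁ • P 1 + a₂ • P 2)
    (hβeq : β = m₀ • P 0 + m₁ • P 1 + m₂ • P 2) : False := by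
  obtain ⟨r, c₀, c₁, c₂, hr0, hc₀, hc₁, hc₂, hcsum, hβα, hczero⟩ :=
    subdiv' ha₀ ha₁ ha₂ hm₀.le hm₁.le hm₂.le hsa hsm hαeq hβeq
  rcases hczero with hcz | hcz | hcz
  · -- c₀ = 0 : K = hull {α, P 1, P 2}, exit towards P 0
    refine interior_contra hUec hUoc hcross hPe hPo hαe hβo
      (show (1:Fin 3) ≠ 0 by decide) (show (2:Fin 3) ≠ 0 by decide) ?_ ?_ ?_
    · refine tri_mem.2 ⟨r, c₁, c₂, hr0, hc₁, hc₂, by rw [hcz] at hcsum; linarith, ?_⟩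
      rw [hcz] at hβα
      linear_combination (norm := module) hβα
    · intro hq
      obtain ⟨w₀, w₁, w₂, hw₀, hw₁, hw₂, hwsum, hweq⟩ := tri_mem.1 hq
      have hcombo : (1:ℝ) • P 0 + (0:ℝ) • P 1 + (0:ℝ) • P 2
          = (w₀*a₀) • P 0 + (w₀*a₁+w₁) • P 1 + (w₀*a₂+w₂) • P 2 := by
        linear_combination (norm := module) hweq + w₀ • hαeq
      obtain ⟨e₀, e₁, e₂⟩ := combo_unique hliP (by norm_num)
        (by linear_combination w₀ * hsa + hwsum) hcombo
      have hw₁z : w₁ = 0 := by nlinarith [mul_nonneg hw₀ ha₁]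
      have hw₂z : w₂ = 0 := by nlinarith [mul_nonneg hw₀ ha₂]
      have hw₀1 : w₀ = 1 := by linarith
      have hαP : α = P 0 := by rw [hweq, hw₀1, hw₁z, hw₂z]; module
      exact hcross 1 0 (by decide) α (hαe 1) (by rw [hαP]; exact hPo 0)
    · intro z hz1 hz2
      obtain ⟨t₁, t₂, ht₁, ht₂, hts, hzeq1⟩ := hz1
      obtain ⟨u₁, u₂, hu₁, hu₂, hus, hzeq2⟩ := hz2
      have hcombo : (t₁*m₀+t₂) • P 0 + (t₁*m₁) • P 1 + (t₁*m₂) • P 2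
          = (0:ℝ) • P 0 + u₁ • P 1 + u₂ • P 2 := by
        linear_combination (norm := module) hzeq1 - hzeq2 - t₁ • hβeq
      obtain ⟨e₀, -, -⟩ := combo_unique hliP
        (by linear_combination t₁ * hsm + hts) (by linarith) hcombo
      have h1 : t₂ = 0 := by nlinarith [mul_nonneg ht₁ hm₀.le]
      have h2 : t₁ = 1 := by linarith
      rw [h2, h1] at e₀
      nlinarith [hm₀]
  · -- c₁ = 0 : K = hull {α, P 0, P 2}, exit towards P 1
    refine interior_contra hUec hUoc hcross hPe hPo hαe hβo
      (show (0:Fin 3) ≠ 1 by decide) (show (2:Fin 3) ≠ 1 by decide) ?_ ?_ ?_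
    · refine tri_mem.2 ⟨r, c₀, c₂, hr0, hc₀, hc₂, by rw [hcz] at hcsum; linarith, ?_⟩
      rw [hcz] at hβα
      linear_combination (norm := module) hβα
    · intro hq
      obtain ⟨w₀, w₁, w₂, hw₀, hw₁, hw₂, hwsum, hweq⟩ := tri_mem.1 hq
      have hcombo : (0:ℝ) • P 0 + (1:ℝ) • P 1 + (0:ℝ) • P 2
          = (w₀*a₀+w₁) • P 0 + (w₀*a₁) • P 1 + (w₀*a₂+w₂) • P 2 := by
        linear_combination (norm := module) hweq + w₀ • hαeq
      obtain ⟨e₀, e₁, e₂⟩ := combo_unique hliP (by norm_num)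
        (by linear_combination w₀ * hsa + hwsum) hcombo
      have hw₁z : w₁ = 0 := by nlinarith [mul_nonneg hw₀ ha₀]
      have hw₂z : w₂ = 0 := by nlinarith [mul_nonneg hw₀ ha₂]
      have hw₀1 : w₀ = 1 := by linarith
      have hαP : α = P 1 := by rw [hweq, hw₀1, hw₁z, hw₂z]; module
      exact hcross 0 1 (by decide) α (hαe 0) (by rw [hαP]; exact hPo 1)
    · intro z hz1 hz2
      obtain ⟨t₁, t₂, ht₁, ht₂, hts, hzeq1⟩ := hz1
      obtain ⟨u₁, u₂, hu₁, hu₂, hus, hzeq2⟩ := hz2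
      have hcombo : (t₁*m₀) • P 0 + (t₁*m₁+t₂) • P 1 + (t₁*m₂) • P 2
          = u₁ • P 0 + (0:ℝ) • P 1 + u₂ • P 2 := by
        linear_combination (norm := module) hzeq1 - hzeq2 - t₁ • hβeq
      obtain ⟨-, e₁, -⟩ := combo_unique hliP
        (by linear_combination t₁ * hsm + hts) (by linarith) hcombo
      have h1 : t₂ = 0 := by nlinarith [mul_nonneg ht₁ hm₁.le]
      have h2 : t₁ = 1 := by linarith
      rw [h2, h1] at e₁
      nlinarith [hm₁]
  · -- c₂ = 0 : K = hull {α, P 0, P 1}, exit towards P 2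
    refine interior_contra hUec hUoc hcross hPe hPo hαe hβo
      (show (0:Fin 3) ≠ 2 by decide) (show (1:Fin 3) ≠ 2 by decide) ?_ ?_ ?_
    · refine tri_mem.2 ⟨r, c₀, c₁, hr0, hc₀, hc₁, by rw [hcz] at hcsum; linarith, ?_⟩
      rw [hcz] at hβα
      linear_combination (norm := module) hβα
    · intro hq
      obtain ⟨w₀, w₁, w₂, hw₀, hw₁, hw₂, hwsum, hweq⟩ := tri_mem.1 hq
      have hcombo : (0:ℝ) • P 0 + (0:ℝ) • P 1 + (1:ℝ) • P 2
          = (w₀*a₀+w₁) • P 0 + (w₀*a₁+w₂) • P 1 + (w₀*a₂) • P 2 := by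
        linear_combination (norm := module) hweq + w₀ • hαeq
      obtain ⟨e₀, e₁, e₂⟩ := combo_unique hliP (by norm_num)
        (by linear_combination w₀ * hsa + hwsum) hcombo
      have hw₁z : w₁ = 0 := by nlinarith [mul_nonneg hw₀ ha₀]
      have hw₂z : w₂ = 0 := by nlinarith [mul_nonneg hw₀ ha₁]
      have hw₀1 : w₀ = 1 := by linarith
      have hαP : α = P 2 := by rw [hweq, hw₀1, hw₁z, hw₂z]; module
      exact hcross 0 2 (by decide) α (hαe 0) (by rw [hαP]; exact hPo 2)
    · intro z hz1 hz2
      obtain ⟨t₁, t₂, ht₁, ht₂, hts, hzeq1⟩ := hz1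
      obtain ⟨u₁, u₂, hu₁, hu₂, hus, hzeq2⟩ := hz2
      have hcombo : (t₁*m₀) • P 0 + (t₁*m₁) • P 1 + (t₁*m₂+t₂) • P 2
          = u₁ • P 0 + u₂ • P 1 + (0:ℝ) • P 2 := by
        linear_combination (norm := module) hzeq1 - hzeq2 - t₁ • hβeq
      obtain ⟨-, -, e₂⟩ := combo_unique hliP
        (by linear_combination t₁ * hsm + hts) (by linarith) hcombo
      have h1 : t₂ = 0 := by nlinarith [mul_nonneg ht₁ hm₂.le]
      have h2 : t₁ = 1 := by linarith
      rw [h2, h1] at e₂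
      nlinarith [hm₂]


lemma Tcode_facts : ∀ σ : Finset (Fin (2*3)),
    ((∃ k : Fin 3, σ = ({⟨2*k.val, by omega⟩, ⟨2*k.val+1, by omega⟩} : Finset (Fin (2*3)))) ∨
     σ = Finset.univ.filter (fun i => i.val % 2 = 0) ∨
     σ = Finset.univ.filter (fun i => i.val % 2 = 1) ∨
     (∃ i, σ = {i}) ∨ σ = ∅) →
    (∀ j k : Fin 3, j ≠ k → ¬(emi j ∈ σ ∧ omi k ∈ σ)) ∧
    (∀ j k l : Fin 3, j ≠ k → emi j ∈ σ → emi k ∈ σ → emi l ∈ σ) ∧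
    (∀ j k l : Fin 3, j ≠ k → omi j ∈ σ → omi k ∈ σ → omi l ∈ σ) := by decide

theorem no_R2 : ¬ HasOpenRealization (2*3) (Tcode 3) 2 := by
  rintro ⟨U, hUconv, hUopen, hcode⟩
  classical
  have hpat : ∀ x : E2, ∃ σ ∈ Tcode 3, ∀ i, i ∈ σ ↔ x ∈ U i := by
    intro x
    have hx : (Finset.univ.filter (fun i => x ∈ U i)) ∈ codeOf U :=
      ⟨x, fun i => by simp⟩
    rw [hcode] at hx
    exact ⟨_, hx, fun i => by simp⟩
  set Ue : Fin 3 → Set E2 := fun k => U (emi k) with hUe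
  set Uo : Fin 3 → Set E2 := fun k => U (omi k) with hUo
  have hcross : ∀ j k : Fin 3, j ≠ k → ∀ x : E2, x ∈ Ue j → x ∈ Uo k → False := by
    intro j k hjk x hxj hxk
    obtain ⟨σ, hσ, hchar⟩ := hpat x
    exact (Tcode_facts σ hσ).1 j k hjk ⟨(hchar (emi j)).2 hxj, (hchar (omi k)).2 hxk⟩
  have hEE : ∀ j k l : Fin 3, j ≠ k → ∀ x : E2, x ∈ Ue j → x ∈ Ue k → x ∈ Ue l := by
    intro j k l hjk x hxj hxk
    obtain ⟨σ, hσ, hchar⟩ := hpat x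
    exact (hchar (emi l)).1 ((Tcode_facts σ hσ).2.1 j k l hjk
      ((hchar (emi j)).2 hxj) ((hchar (emi k)).2 hxk))
  have hOO : ∀ j k l : Fin 3, j ≠ k → ∀ x : E2, x ∈ Uo j → x ∈ Uo k → x ∈ Uo l := by
    intro j k l hjk x hxj hxk
    obtain ⟨σ, hσ, hchar⟩ := hpat x
    exact (hchar (omi l)).1 ((Tcode_facts σ hσ).2.2 j k l hjk
      ((hchar (omi j)).2 hxj) ((hchar (omi k)).2 hxk))
  have hUec : ∀ k, Convex ℝ (Ue k) := fun k => hUconv _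
  have hUoc : ∀ k, Convex ℝ (Uo k) := fun k => hUconv _
  have hUeo : ∀ k, IsOpen (Ue k) := fun k => hUopen _
  have hUoo : ∀ k, IsOpen (Uo k) := fun k => hUopen _
  -- witnesses
  have hevens : (Finset.univ.filter (fun i : Fin (2*3) => i.val % 2 = 0)) ∈ codeOf U := by
    rw [hcode]; exact Or.inr (Or.inl rfl)
  obtain ⟨a, ha⟩ := hevens
  have haE : ∀ k : Fin 3, a ∈ Ue k := by
    intro k; fin_cases k
    · exact (ha (emi 0)).1 (by decide)
    · exact (ha (emi 1)).1 (by decide)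
    · exact (ha (emi 2)).1 (by decide)
  have hodds : (Finset.univ.filter (fun i : Fin (2*3) => i.val % 2 = 1)) ∈ codeOf U := by
    rw [hcode]; exact Or.inr (Or.inr (Or.inl rfl))
  obtain ⟨b, hb⟩ := hodds
  have hbO : ∀ k : Fin 3, b ∈ Uo k := by
    intro k; fin_cases k
    · exact (hb (omi 0)).1 (by decide)
    · exact (hb (omi 1)).1 (by decide)
    · exact (hb (omi 2)).1 (by decide)
  have hpair : ∀ k : Fin 3, ∃ p : E2, p ∈ Ue k ∧ p ∈ Uo k := by
    intro k
    have h1 : ({emi k, omi k} : Finset (Fin (2*3))) ∈ codeOf U := by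
      rw [hcode]; exact Or.inl ⟨k, rfl⟩
    obtain ⟨p, hp⟩ := h1
    exact ⟨p, (hp (emi k)).1 (Finset.mem_insert_self _ _),
      (hp (omi k)).1 (by simp)⟩
  choose P hPe hPo using hpair
  -- the two core points
  obtain ⟨α, hαA, hαT⟩ := sgen (hUec 0) (hUec 1) (hUec 2) (hUeo 0) (hUeo 1) (hUeo 2)
    (fun x hx => hEE 0 1 2 (by decide) x hx.1 hx.2)
    (fun x hx => hEE 1 2 0 (by decide) x hx.1 hx.2)
    (fun x hx => hEE 2 0 1 (by decide) x hx.1 hx.2)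
    ⟨⟨haE 0, haE 1⟩, haE 2⟩ (hPe 0) (hPe 1) (hPe 2)
  obtain ⟨β, hβB, hβT⟩ := sgen (hUoc 0) (hUoc 1) (hUoc 2) (hUoo 0) (hUoo 1) (hUoo 2)
    (fun x hx => hOO 0 1 2 (by decide) x hx.1 hx.2)
    (fun x hx => hOO 1 2 0 (by decide) x hx.1 hx.2)
    (fun x hx => hOO 2 0 1 (by decide) x hx.1 hx.2)
    ⟨⟨hbO 0, hbO 1⟩, hbO 2⟩ (hPo 0) (hPo 1) (hPo 2)
  have hαe : ∀ k : Fin 3, α ∈ Ue k := by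
    intro k; fin_cases k
    · exact hαA.1.1
    · exact hαA.1.2
    · exact hαA.2
  have hβo : ∀ k : Fin 3, β ∈ Uo k := by
    intro k; fin_cases k
    · exact hβB.1.1
    · exact hβB.1.2
    · exact hβB.2
  obtain ⟨a₀, a₁, a₂, ha₀, ha₁, ha₂, hsa, hαeq⟩ := tri_mem.1 hαT
  obtain ⟨m₀, m₁, m₂, hm₀, hm₁, hm₂, hsm, hβeq⟩ := tri_mem.1 hβT
  have hcross' : ∀ j k : Fin 3, j ≠ k → ∀ x : E2, x ∈ Uo j → x ∈ Ue k → False :=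
    fun j k hjk x h1 h2 => hcross k j hjk.symm x h2 h1
  -- the double-side contradiction
  have sideContra :
      (α ∈ segment ℝ (P 0) (P 1) ∨ α ∈ segment ℝ (P 0) (P 2) ∨ α ∈ segment ℝ (P 1) (P 2)) →
      (β ∈ segment ℝ (P 0) (P 1) ∨ β ∈ segment ℝ (P 0) (P 2) ∨ β ∈ segment ℝ (P 1) (P 2)) →
      False := by
    intro hA hB
    rcases hA with hA | hA | hA <;> rcases hB with hB | hB | hB
    · exact same_side hUec hcross hPe hαe hβo (show (0:Fin 3) ≠ 1 by decide) hA hB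
    · exact cross_side hUec hUoc hcross hPe hPo hαe hβo
        (show (2:Fin 3) ≠ 1 by decide) hB hA
    · exact cross_side hUec hUoc hcross hPe hPo hαe hβo
        (show (2:Fin 3) ≠ 0 by decide) hB ((segment_symm ℝ (P 0) (P 1)) ▸ hA)
    · exact cross_side hUec hUoc hcross hPe hPo hαe hβo
        (show (1:Fin 3) ≠ 2 by decide) hB hA
    · exact same_side hUec hcross hPe hαe hβo (show (0:Fin 3) ≠ 2 by decide) hA hB
    · exact cross_side hUec hUoc hcross hPe hPo hαe hβo
        (show (1:Fin 3) ≠ 0 by decide) ((segment_symm ℝ (P 1) (P 2)) ▸ hB)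
        ((segment_symm ℝ (P 0) (P 2)) ▸ hA)
    · exact cross_side hUec hUoc hcross hPe hPo hαe hβo
        (show (0:Fin 3) ≠ 2 by decide) ((segment_symm ℝ (P 0) (P 1)) ▸ hB) hA
    · exact cross_side hUec hUoc hcross hPe hPo hαe hβo
        (show (0:Fin 3) ≠ 1 by decide) ((segment_symm ℝ (P 0) (P 2)) ▸ hB)
        ((segment_symm ℝ (P 1) (P 2)) ▸ hA)
    · exact same_side hUec hcross hPe hαe hβo (show (1:Fin 3) ≠ 2 by decide) hA hB
  by_cases hliP : LinearIndependent ℝ ![P 1 - P 0, P 2 - P 0]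
  · -- nondegenerate case
    have hβres : (β ∈ segment ℝ (P 0) (P 1) ∨ β ∈ segment ℝ (P 0) (P 2) ∨
        β ∈ segment ℝ (P 1) (P 2)) ∨ (0 < m₀ ∧ 0 < m₁ ∧ 0 < m₂) := by
      by_cases h0 : m₀ = 0
      · rw [h0] at hβeq
        exact Or.inl (Or.inr (Or.inr ⟨m₁, m₂, hm₁, hm₂, by linarith,
          by linear_combination (norm := module) -hβeq⟩))
      by_cases h1 : m₁ = 0
      · rw [h1] at hβeq
        exact Or.inl (Or.inr (Or.inl ⟨m₀, m₂, hm₀, hm₂, by linarith,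
          by linear_combination (norm := module) -hβeq⟩))
      by_cases h2 : m₂ = 0
      · rw [h2] at hβeq
        exact Or.inl (Or.inl ⟨m₀, m₁, hm₀, hm₁, by linarith,
          by linear_combination (norm := module) -hβeq⟩)
      · exact Or.inr ⟨lt_of_le_of_ne hm₀ (Ne.symm h0), lt_of_le_of_ne hm₁ (Ne.symm h1),
          lt_of_le_of_ne hm₂ (Ne.symm h2)⟩
    have hαres : (α ∈ segment ℝ (P 0) (P 1) ∨ α ∈ segment ℝ (P 0) (P 2) ∨
        α ∈ segment ℝ (P 1) (P 2)) ∨ (0 < a₀ ∧ 0 < a₁ ∧ 0 < a₂) := by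
      by_cases h0 : a₀ = 0
      · rw [h0] at hαeq
        exact Or.inl (Or.inr (Or.inr ⟨a₁, a₂, ha₁, ha₂, by linarith,
          by linear_combination (norm := module) -hαeq⟩))
      by_cases h1 : a₁ = 0
      · rw [h1] at hαeq
        exact Or.inl (Or.inr (Or.inl ⟨a₀, a₂, ha₀, ha₂, by linarith,
          by linear_combination (norm := module) -hαeq⟩))
      by_cases h2 : a₂ = 0
      · rw [h2] at hαeq
        exact Or.inl (Or.inl ⟨a₀, a₁, ha₀, ha₁, by linarith,
          by linear_combination (norm := module) -hαeq⟩)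
      · exact Or.inr ⟨lt_of_le_of_ne ha₀ (Ne.symm h0), lt_of_le_of_ne ha₁ (Ne.symm h1),
          lt_of_le_of_ne ha₂ (Ne.symm h2)⟩
    rcases hβres with hβside | hβpos
    · rcases hαres with hαside | hαpos
      · exact sideContra hαside hβside
      · exact interior_full hUoc hUec hcross' hPo hPe hβo hαe hliP
          hm₀ hm₁ hm₂ hαpos.1 hαpos.2.1 hαpos.2.2 hsm hsa hβeq hαeq
    · exact interior_full hUec hUoc hcross hPe hPo hαe hβo hliP
        ha₀ ha₁ ha₂ hβpos.1 hβpos.2.1 hβpos.2.2 hsa hsm hαeq hβeq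
  · -- degenerate case : the three pair-points are collinear
    have hcolP : Collinear ℝ ({P 0, P 1, P 2} : Set E2) := by
      rw [linearIndependent_fin2] at hliP
      push_neg at hliP
      simp only [Matrix.cons_val_one, Matrix.head_cons, Matrix.cons_val_zero] at hliP
      by_cases hz : P 2 - P 0 = 0
      · have h20 : P 2 = P 0 := sub_eq_zero.1 hz
        refine (collinear_pair ℝ (P 0) (P 1)).subset ?_
        intro p hp
        simp only [Set.mem_insert_iff, Set.mem_singleton_iff] at hp
        rcases hp with rfl | rfl | rfl
        · exact Or.inl rfl
        · exact Or.inr rfl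
        · rw [h20]; exact Or.inl rfl
      · obtain ⟨aa, haz⟩ := hliP hz
        rw [collinear_iff_of_mem (show P 0 ∈ ({P 0, P 1, P 2} : Set E2) by simp)]
        refine ⟨P 2 - P 0, ?_⟩
        intro p hp
        simp only [Set.mem_insert_iff, Set.mem_singleton_iff] at hp
        rcases hp with rfl | rfl | rfl
        · exact ⟨0, by simp⟩
        · exact ⟨aa, by rw [haz]; simp [vadd_eq_add]⟩
        · exact ⟨1, by simp [vadd_eq_add]⟩
    have hαside := hull_collinear hcolP hαT
    have hβside := hull_collinear hcolP hβT
    rcases hαside with (h | h) | h <;> rcases hβside with (h' | h') | h'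
    all_goals exact sideContra (by tauto) (by tauto)

end Neg

section Pos
open Set

local notation "E3" => EuclideanSpace ℝ (Fin 3)

/-- open halfspace `0 < a x + b y + c z` -/
def halfS (a b c : ℝ) : Set E3 := {p : E3 | 0 < a * p 0 + b * p 1 + c * p 2}

lemma halfS_convex (a b c : ℝ) : Convex ℝ (halfS a b c) := by
  have hlin : IsLinearMap ℝ (fun p : E3 => a * p 0 + b * p 1 + c * p 2) := by
    constructor
    · intro x y
      simp only [PiLp.add_apply]
      ring
    · intro s x
      simp only [PiLp.smul_apply, smul_eq_mul]
      ring
  exact convex_halfSpace_gt hlin 0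

lemma halfS_open (a b c : ℝ) : IsOpen (halfS a b c) := by
  have hcont : Continuous (fun p : E3 => a * p 0 + b * p 1 + c * p 2) := by
    apply Continuous.add
    apply Continuous.add
    · exact continuous_const.mul (PiLp.continuous_apply 2 _ 0)
    · exact continuous_const.mul (PiLp.continuous_apply 2 _ 1)
    · exact continuous_const.mul (PiLp.continuous_apply 2 _ 2)
  exact isOpen_lt continuous_const hcont

def Ureal : Fin (2*3) → Set E3 :=
  ![halfS 0 1 (-1) ∩ halfS (-1) (-1) (-1),
    halfS 0 1 1 ∩ halfS (-1) (-1) 1,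
    halfS 1 0 (-1) ∩ halfS (-1) (-1) (-1),
    halfS 1 0 1 ∩ halfS (-1) (-1) 1,
    halfS 1 0 (-1) ∩ halfS 0 1 (-1),
    halfS 1 0 1 ∩ halfS 0 1 1]

lemma Ureal_convex : ∀ i, Convex ℝ (Ureal i) := by
  intro i
  fin_cases i <;> exact (halfS_convex _ _ _).inter (halfS_convex _ _ _)

lemma Ureal_open : ∀ i, IsOpen (Ureal i) := by
  intro i
  fin_cases i <;> exact (halfS_open _ _ _).inter (halfS_open _ _ _)

-- membership unfolding test
example (x : E3) (h : x ∈ Ureal 3) : 0 < x 0 + x 2 := by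
  have h' : x ∈ halfS 1 0 1 ∩ halfS (-1) (-1) 1 := h
  have := h'.1
  simp only [halfS, mem_setOf_eq] at this
  linarith

lemma mU0 (x : E3) : x ∈ Ureal 0 ↔ (x 2 < x 1 ∧ x 0 + x 1 + x 2 < 0) := by
  show x ∈ halfS 0 1 (-1) ∩ halfS (-1) (-1) (-1) ↔ _
  simp only [halfS, mem_inter_iff, mem_setOf_eq]
  constructor <;> intro h <;> exact ⟨by linarith [h.1], by linarith [h.2]⟩

lemma mU1 (x : E3) : x ∈ Ureal 1 ↔ (0 < x 1 + x 2 ∧ x 0 + x 1 < x 2) := by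
  show x ∈ halfS 0 1 1 ∩ halfS (-1) (-1) 1 ↔ _
  simp only [halfS, mem_inter_iff, mem_setOf_eq]
  constructor <;> intro h <;> exact ⟨by linarith [h.1], by linarith [h.2]⟩

lemma mU2 (x : E3) : x ∈ Ureal 2 ↔ (x 2 < x 0 ∧ x 0 + x 1 + x 2 < 0) := by
  show x ∈ halfS 1 0 (-1) ∩ halfS (-1) (-1) (-1) ↔ _
  simp only [halfS, mem_inter_iff, mem_setOf_eq]
  constructor <;> intro h <;> exact ⟨by linarith [h.1], by linarith [h.2]⟩

lemma mU3 (x : E3) : x ∈ Ureal 3 ↔ (0 < x 0 + x 2 ∧ x 0 + x 1 < x 2) := by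
  show x ∈ halfS 1 0 1 ∩ halfS (-1) (-1) 1 ↔ _
  simp only [halfS, mem_inter_iff, mem_setOf_eq]
  constructor <;> intro h <;> exact ⟨by linarith [h.1], by linarith [h.2]⟩

lemma mU4 (x : E3) : x ∈ Ureal 4 ↔ (x 2 < x 0 ∧ x 2 < x 1) := by
  show x ∈ halfS 1 0 (-1) ∩ halfS 0 1 (-1) ↔ _
  simp only [halfS, mem_inter_iff, mem_setOf_eq]
  constructor <;> intro h <;> exact ⟨by linarith [h.1], by linarith [h.2]⟩

lemma mU5 (x : E3) : x ∈ Ureal 5 ↔ (0 < x 0 + x 2 ∧ 0 < x 1 + x 2) := by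
  show x ∈ halfS 1 0 1 ∩ halfS 0 1 1 ↔ _
  simp only [halfS, mem_inter_iff, mem_setOf_eq]
  constructor <;> intro h <;> exact ⟨by linarith [h.1], by linarith [h.2]⟩



set_option maxHeartbeats 1000000 in
set_option synthInstance.maxHeartbeats 1000000 in
set_option synthInstance.maxSize 2000 in
lemma shape : ∀ σ : Finset (Fin (2*3)),
    (∀ j k l : Fin 3, j ≠ k → emi j ∈ σ → emi k ∈ σ → emi l ∈ σ) →
    (∀ j k l : Fin 3, j ≠ k → omi j ∈ σ → omi k ∈ σ → omi l ∈ σ) →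
    (∀ j k : Fin 3, j ≠ k → ¬(emi j ∈ σ ∧ omi k ∈ σ)) →
    ((∃ k : Fin 3, σ = ({⟨2*k.val, by omega⟩, ⟨2*k.val+1, by omega⟩} : Finset (Fin (2*3)))) ∨
     σ = Finset.univ.filter (fun i => i.val % 2 = 0) ∨
     σ = Finset.univ.filter (fun i => i.val % 2 = 1) ∨
     (∃ i, σ = {i}) ∨ σ = ∅) := by decide

lemma forward (σ : Finset (Fin (2*3))) (x : E3) (hx : ∀ i, i ∈ σ ↔ x ∈ Ureal i) :
    σ ∈ Tcode 3 := by
  have g1 : x ∈ Ureal 0 → x ∈ Ureal 2 → x ∈ Ureal 4 := by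
    rw [mU0, mU2, mU4]; intro hA hB; exact ⟨hB.1, hA.1⟩
  have g2 : x ∈ Ureal 0 → x ∈ Ureal 4 → x ∈ Ureal 2 := by
    rw [mU0, mU2, mU4]; intro hA hB; exact ⟨hB.1, hA.2⟩
  have g3 : x ∈ Ureal 2 → x ∈ Ureal 4 → x ∈ Ureal 0 := by
    rw [mU0, mU2, mU4]; intro hA hB; exact ⟨hB.2, hA.2⟩
  have g4 : x ∈ Ureal 1 → x ∈ Ureal 3 → x ∈ Ureal 5 := by
    rw [mU1, mU3, mU5]; intro hA hB; exact ⟨hB.1, hA.1⟩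
  have g5 : x ∈ Ureal 1 → x ∈ Ureal 5 → x ∈ Ureal 3 := by
    rw [mU1, mU3, mU5]; intro hA hB; exact ⟨hB.1, hA.2⟩
  have g6 : x ∈ Ureal 3 → x ∈ Ureal 5 → x ∈ Ureal 1 := by
    rw [mU1, mU3, mU5]; intro hA hB; exact ⟨hB.2, hA.2⟩
  have c1 : x ∈ Ureal 0 → x ∈ Ureal 3 → False := by
    rw [mU0, mU3]; intro hA hB; linarith [hA.1, hA.2, hB.1, hB.2]
  have c2 : x ∈ Ureal 0 → x ∈ Ureal 5 → False := by
    rw [mU0, mU5]; intro hA hB; linarith [hA.1, hA.2, hB.1, hB.2]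
  have c3 : x ∈ Ureal 2 → x ∈ Ureal 1 → False := by
    rw [mU2, mU1]; intro hA hB; linarith [hA.1, hA.2, hB.1, hB.2]
  have c4 : x ∈ Ureal 2 → x ∈ Ureal 5 → False := by
    rw [mU2, mU5]; intro hA hB; linarith [hA.1, hA.2, hB.1, hB.2]
  have c5 : x ∈ Ureal 4 → x ∈ Ureal 1 → False := by
    rw [mU4, mU1]; intro hA hB; linarith [hA.1, hA.2, hB.1, hB.2]
  have c6 : x ∈ Ureal 4 → x ∈ Ureal 3 → False := by
    rw [mU4, mU3]; intro hA hB; linarith [hA.1, hA.2, hB.1, hB.2]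
  have hEEσ : ∀ j k l : Fin 3, j ≠ k → emi j ∈ σ → emi k ∈ σ → emi l ∈ σ := by
    intro j k l hjk hj hk
    rw [hx] at hj hk ⊢
    fin_cases j <;> fin_cases k <;> fin_cases l <;>
      first
      | exact absurd rfl hjk
      | assumption
      | exact g1 hj hk
      | exact g2 hj hk
      | exact g3 hj hk
      | exact g1 hk hj
      | exact g2 hk hj
      | exact g3 hk hj
  have hOOσ : ∀ j k l : Fin 3, j ≠ k → omi j ∈ σ → omi k ∈ σ → omi l ∈ σ := by
    intro j k l hjk hj hk
    rw [hx] at hj hk ⊢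
    fin_cases j <;> fin_cases k <;> fin_cases l <;>
      first
      | exact absurd rfl hjk
      | assumption
      | exact g4 hj hk
      | exact g5 hj hk
      | exact g6 hj hk
      | exact g4 hk hj
      | exact g5 hk hj
      | exact g6 hk hj
  have hXσ : ∀ j k : Fin 3, j ≠ k → ¬(emi j ∈ σ ∧ omi k ∈ σ) := by
    intro j k hjk ⟨hj, hk⟩
    rw [hx] at hj hk
    fin_cases j <;> fin_cases k <;>
      first
      | exact absurd rfl hjk
      | exact c1 hj hk
      | exact c2 hj hk
      | exact c3 hj hk
      | exact c4 hj hk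
      | exact c5 hj hk
      | exact c6 hj hk
  exact shape σ hEEσ hOOσ hXσ

noncomputable def pt (A B Z : ℝ) : E3 := (WithLp.equiv 2 (Fin 3 → ℝ)).symm ![A, B, Z]
lemma pt0 (A B Z : ℝ) : pt A B Z 0 = A := rfl
lemma pt1 (A B Z : ℝ) : pt A B Z 1 = B := rfl
lemma pt2 (A B Z : ℝ) : pt A B Z 2 = Z := rfl

lemma backward : ∀ σ ∈ Tcode 3, σ ∈ codeOf Ureal := by
  intro σ hσ
  rcases hσ with ⟨k, rfl⟩ | rfl | rfl | ⟨i, rfl⟩ | rfl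
  · fin_cases k
    · refine ⟨pt (-2) (1) (0), ?_⟩
      have h0 : pt (-2) (1) (0) ∈ Ureal 0 := by
        rw [mU0]; constructor <;> (simp only [pt0, pt1, pt2]; norm_num)
      have h1 : pt (-2) (1) (0) ∈ Ureal 1 := by
        rw [mU1]; constructor <;> (simp only [pt0, pt1, pt2]; norm_num)
      have h2 : pt (-2) (1) (0) ∉ Ureal 2 := by
        rw [mU2]; rintro ⟨u, v⟩; simp only [pt0, pt1, pt2] at u v; linarith
      have h3 : pt (-2) (1) (0) ∉ Ureal 3 := by
        rw [mU3]; rintro ⟨u, v⟩; simp only [pt0, pt1, pt2] at u v; linarith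
      have h4 : pt (-2) (1) (0) ∉ Ureal 4 := by
        rw [mU4]; rintro ⟨u, v⟩; simp only [pt0, pt1, pt2] at u v; linarith
      have h5 : pt (-2) (1) (0) ∉ Ureal 5 := by
        rw [mU5]; rintro ⟨u, v⟩; simp only [pt0, pt1, pt2] at u v; linarith
      intro i; fin_cases i
      · exact iff_of_true (by decide) h0
      · exact iff_of_true (by decide) h1
      · exact iff_of_false (by decide) h2
      · exact iff_of_false (by decide) h3
      · exact iff_of_false (by decide) h4
      · exact iff_of_false (by decide) h5
    · refine ⟨pt (1) (-2) (0), ?_⟩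
      have h0 : pt (1) (-2) (0) ∉ Ureal 0 := by
        rw [mU0]; rintro ⟨u, v⟩; simp only [pt0, pt1, pt2] at u v; linarith
      have h1 : pt (1) (-2) (0) ∉ Ureal 1 := by
        rw [mU1]; rintro ⟨u, v⟩; simp only [pt0, pt1, pt2] at u v; linarith
      have h2 : pt (1) (-2) (0) ∈ Ureal 2 := by
        rw [mU2]; constructor <;> (simp only [pt0, pt1, pt2]; norm_num)
      have h3 : pt (1) (-2) (0) ∈ Ureal 3 := by
        rw [mU3]; constructor <;> (simp only [pt0, pt1, pt2]; norm_num)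
      have h4 : pt (1) (-2) (0) ∉ Ureal 4 := by
        rw [mU4]; rintro ⟨u, v⟩; simp only [pt0, pt1, pt2] at u v; linarith
      have h5 : pt (1) (-2) (0) ∉ Ureal 5 := by
        rw [mU5]; rintro ⟨u, v⟩; simp only [pt0, pt1, pt2] at u v; linarith
      intro i; fin_cases i
      · exact iff_of_false (by decide) h0
      · exact iff_of_false (by decide) h1
      · exact iff_of_true (by decide) h2
      · exact iff_of_true (by decide) h3
      · exact iff_of_false (by decide) h4
      · exact iff_of_false (by decide) h5
    · refine ⟨pt (1) (1) (0), ?_⟩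
      have h0 : pt (1) (1) (0) ∉ Ureal 0 := by
        rw [mU0]; rintro ⟨u, v⟩; simp only [pt0, pt1, pt2] at u v; linarith
      have h1 : pt (1) (1) (0) ∉ Ureal 1 := by
        rw [mU1]; rintro ⟨u, v⟩; simp only [pt0, pt1, pt2] at u v; linarith
      have h2 : pt (1) (1) (0) ∉ Ureal 2 := by
        rw [mU2]; rintro ⟨u, v⟩; simp only [pt0, pt1, pt2] at u v; linarith
      have h3 : pt (1) (1) (0) ∉ Ureal 3 := by
        rw [mU3]; rintro ⟨u, v⟩; simp only [pt0, pt1, pt2] at u v; linarith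
      have h4 : pt (1) (1) (0) ∈ Ureal 4 := by
        rw [mU4]; constructor <;> (simp only [pt0, pt1, pt2]; norm_num)
      have h5 : pt (1) (1) (0) ∈ Ureal 5 := by
        rw [mU5]; constructor <;> (simp only [pt0, pt1, pt2]; norm_num)
      intro i; fin_cases i
      · exact iff_of_false (by decide) h0
      · exact iff_of_false (by decide) h1
      · exact iff_of_false (by decide) h2
      · exact iff_of_false (by decide) h3
      · exact iff_of_true (by decide) h4
      · exact iff_of_true (by decide) h5
  · refine ⟨pt (0) (0) (-1), ?_⟩
    have h0 : pt (0) (0) (-1) ∈ Ureal 0 := by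
      rw [mU0]; constructor <;> (simp only [pt0, pt1, pt2]; norm_num)
    have h1 : pt (0) (0) (-1) ∉ Ureal 1 := by
      rw [mU1]; rintro ⟨u, v⟩; simp only [pt0, pt1, pt2] at u v; linarith
    have h2 : pt (0) (0) (-1) ∈ Ureal 2 := by
      rw [mU2]; constructor <;> (simp only [pt0, pt1, pt2]; norm_num)
    have h3 : pt (0) (0) (-1) ∉ Ureal 3 := by
      rw [mU3]; rintro ⟨u, v⟩; simp only [pt0, pt1, pt2] at u v; linarith
    have h4 : pt (0) (0) (-1) ∈ Ureal 4 := by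
      rw [mU4]; constructor <;> (simp only [pt0, pt1, pt2]; norm_num)
    have h5 : pt (0) (0) (-1) ∉ Ureal 5 := by
      rw [mU5]; rintro ⟨u, v⟩; simp only [pt0, pt1, pt2] at u v; linarith
    intro i; fin_cases i
    · exact iff_of_true (by decide) h0
    · exact iff_of_false (by decide) h1
    · exact iff_of_true (by decide) h2
    · exact iff_of_false (by decide) h3
    · exact iff_of_true (by decide) h4
    · exact iff_of_false (by decide) h5
  · refine ⟨pt (0) (0) (1), ?_⟩
    have h0 : pt (0) (0) (1) ∉ Ureal 0 := by
      rw [mU0]; rintro ⟨u, v⟩; simp only [pt0, pt1, pt2] at u v; linarith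
    have h1 : pt (0) (0) (1) ∈ Ureal 1 := by
      rw [mU1]; constructor <;> (simp only [pt0, pt1, pt2]; norm_num)
    have h2 : pt (0) (0) (1) ∉ Ureal 2 := by
      rw [mU2]; rintro ⟨u, v⟩; simp only [pt0, pt1, pt2] at u v; linarith
    have h3 : pt (0) (0) (1) ∈ Ureal 3 := by
      rw [mU3]; constructor <;> (simp only [pt0, pt1, pt2]; norm_num)
    have h4 : pt (0) (0) (1) ∉ Ureal 4 := by
      rw [mU4]; rintro ⟨u, v⟩; simp only [pt0, pt1, pt2] at u v; linarith
    have h5 : pt (0) (0) (1) ∈ Ureal 5 := by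
      rw [mU5]; constructor <;> (simp only [pt0, pt1, pt2]; norm_num)
    intro i; fin_cases i
    · exact iff_of_false (by decide) h0
    · exact iff_of_true (by decide) h1
    · exact iff_of_false (by decide) h2
    · exact iff_of_true (by decide) h3
    · exact iff_of_false (by decide) h4
    · exact iff_of_true (by decide) h5
  · fin_cases i
    · refine ⟨pt (-2) (1) (-1), ?_⟩
      have h0 : pt (-2) (1) (-1) ∈ Ureal 0 := by
        rw [mU0]; constructor <;> (simp only [pt0, pt1, pt2]; norm_num)
      have h1 : pt (-2) (1) (-1) ∉ Ureal 1 := by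
        rw [mU1]; rintro ⟨u, v⟩; simp only [pt0, pt1, pt2] at u v; linarith
      have h2 : pt (-2) (1) (-1) ∉ Ureal 2 := by
        rw [mU2]; rintro ⟨u, v⟩; simp only [pt0, pt1, pt2] at u v; linarith
      have h3 : pt (-2) (1) (-1) ∉ Ureal 3 := by
        rw [mU3]; rintro ⟨u, v⟩; simp only [pt0, pt1, pt2] at u v; linarith
      have h4 : pt (-2) (1) (-1) ∉ Ureal 4 := by
        rw [mU4]; rintro ⟨u, v⟩; simp only [pt0, pt1, pt2] at u v; linarith
      have h5 : pt (-2) (1) (-1) ∉ Ureal 5 := by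
        rw [mU5]; rintro ⟨u, v⟩; simp only [pt0, pt1, pt2] at u v; linarith
      intro i; fin_cases i
      · exact iff_of_true (by decide) h0
      · exact iff_of_false (by decide) h1
      · exact iff_of_false (by decide) h2
      · exact iff_of_false (by decide) h3
      · exact iff_of_false (by decide) h4
      · exact iff_of_false (by decide) h5
    · refine ⟨pt (-2) (1) (1), ?_⟩
      have h0 : pt (-2) (1) (1) ∉ Ureal 0 := by
        rw [mU0]; rintro ⟨u, v⟩; simp only [pt0, pt1, pt2] at u v; linarith
      have h1 : pt (-2) (1) (1) ∈ Ureal 1 := by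
        rw [mU1]; constructor <;> (simp only [pt0, pt1, pt2]; norm_num)
      have h2 : pt (-2) (1) (1) ∉ Ureal 2 := by
        rw [mU2]; rintro ⟨u, v⟩; simp only [pt0, pt1, pt2] at u v; linarith
      have h3 : pt (-2) (1) (1) ∉ Ureal 3 := by
        rw [mU3]; rintro ⟨u, v⟩; simp only [pt0, pt1, pt2] at u v; linarith
      have h4 : pt (-2) (1) (1) ∉ Ureal 4 := by
        rw [mU4]; rintro ⟨u, v⟩; simp only [pt0, pt1, pt2] at u v; linarith
      have h5 : pt (-2) (1) (1) ∉ Ureal 5 := by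
        rw [mU5]; rintro ⟨u, v⟩; simp only [pt0, pt1, pt2] at u v; linarith
      intro i; fin_cases i
      · exact iff_of_false (by decide) h0
      · exact iff_of_true (by decide) h1
      · exact iff_of_false (by decide) h2
      · exact iff_of_false (by decide) h3
      · exact iff_of_false (by decide) h4
      · exact iff_of_false (by decide) h5
    · refine ⟨pt (1) (-2) (-1), ?_⟩
      have h0 : pt (1) (-2) (-1) ∉ Ureal 0 := by
        rw [mU0]; rintro ⟨u, v⟩; simp only [pt0, pt1, pt2] at u v; linarith
      have h1 : pt (1) (-2) (-1) ∉ Ureal 1 := by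
        rw [mU1]; rintro ⟨u, v⟩; simp only [pt0, pt1, pt2] at u v; linarith
      have h2 : pt (1) (-2) (-1) ∈ Ureal 2 := by
        rw [mU2]; constructor <;> (simp only [pt0, pt1, pt2]; norm_num)
      have h3 : pt (1) (-2) (-1) ∉ Ureal 3 := by
        rw [mU3]; rintro ⟨u, v⟩; simp only [pt0, pt1, pt2] at u v; linarith
      have h4 : pt (1) (-2) (-1) ∉ Ureal 4 := by
        rw [mU4]; rintro ⟨u, v⟩; simp only [pt0, pt1, pt2] at u v; linarith
      have h5 : pt (1) (-2) (-1) ∉ Ureal 5 := by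
        rw [mU5]; rintro ⟨u, v⟩; simp only [pt0, pt1, pt2] at u v; linarith
      intro i; fin_cases i
      · exact iff_of_false (by decide) h0
      · exact iff_of_false (by decide) h1
      · exact iff_of_true (by decide) h2
      · exact iff_of_false (by decide) h3
      · exact iff_of_false (by decide) h4
      · exact iff_of_false (by decide) h5
    · refine ⟨pt (1) (-2) (1), ?_⟩
      have h0 : pt (1) (-2) (1) ∉ Ureal 0 := by
        rw [mU0]; rintro ⟨u, v⟩; simp only [pt0, pt1, pt2] at u v; linarith
      have h1 : pt (1) (-2) (1) ∉ Ureal 1 := by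
        rw [mU1]; rintro ⟨u, v⟩; simp only [pt0, pt1, pt2] at u v; linarith
      have h2 : pt (1) (-2) (1) ∉ Ureal 2 := by
        rw [mU2]; rintro ⟨u, v⟩; simp only [pt0, pt1, pt2] at u v; linarith
      have h3 : pt (1) (-2) (1) ∈ Ureal 3 := by
        rw [mU3]; constructor <;> (simp only [pt0, pt1, pt2]; norm_num)
      have h4 : pt (1) (-2) (1) ∉ Ureal 4 := by
        rw [mU4]; rintro ⟨u, v⟩; simp only [pt0, pt1, pt2] at u v; linarith
      have h5 : pt (1) (-2) (1) ∉ Ureal 5 := by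
        rw [mU5]; rintro ⟨u, v⟩; simp only [pt0, pt1, pt2] at u v; linarith
      intro i; fin_cases i
      · exact iff_of_false (by decide) h0
      · exact iff_of_false (by decide) h1
      · exact iff_of_false (by decide) h2
      · exact iff_of_true (by decide) h3
      · exact iff_of_false (by decide) h4
      · exact iff_of_false (by decide) h5
    · refine ⟨pt (1) (1) (-1), ?_⟩
      have h0 : pt (1) (1) (-1) ∉ Ureal 0 := by
        rw [mU0]; rintro ⟨u, v⟩; simp only [pt0, pt1, pt2] at u v; linarith
      have h1 : pt (1) (1) (-1) ∉ Ureal 1 := by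
        rw [mU1]; rintro ⟨u, v⟩; simp only [pt0, pt1, pt2] at u v; linarith
      have h2 : pt (1) (1) (-1) ∉ Ureal 2 := by
        rw [mU2]; rintro ⟨u, v⟩; simp only [pt0, pt1, pt2] at u v; linarith
      have h3 : pt (1) (1) (-1) ∉ Ureal 3 := by
        rw [mU3]; rintro ⟨u, v⟩; simp only [pt0, pt1, pt2] at u v; linarith
      have h4 : pt (1) (1) (-1) ∈ Ureal 4 := by
        rw [mU4]; constructor <;> (simp only [pt0, pt1, pt2]; norm_num)
      have h5 : pt (1) (1) (-1) ∉ Ureal 5 := by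
        rw [mU5]; rintro ⟨u, v⟩; simp only [pt0, pt1, pt2] at u v; linarith
      intro i; fin_cases i
      · exact iff_of_false (by decide) h0
      · exact iff_of_false (by decide) h1
      · exact iff_of_false (by decide) h2
      · exact iff_of_false (by decide) h3
      · exact iff_of_true (by decide) h4
      · exact iff_of_false (by decide) h5
    · refine ⟨pt (1) (1) (1), ?_⟩
      have h0 : pt (1) (1) (1) ∉ Ureal 0 := by
        rw [mU0]; rintro ⟨u, v⟩; simp only [pt0, pt1, pt2] at u v; linarith
      have h1 : pt (1) (1) (1) ∉ Ureal 1 := by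
        rw [mU1]; rintro ⟨u, v⟩; simp only [pt0, pt1, pt2] at u v; linarith
      have h2 : pt (1) (1) (1) ∉ Ureal 2 := by
        rw [mU2]; rintro ⟨u, v⟩; simp only [pt0, pt1, pt2] at u v; linarith
      have h3 : pt (1) (1) (1) ∉ Ureal 3 := by
        rw [mU3]; rintro ⟨u, v⟩; simp only [pt0, pt1, pt2] at u v; linarith
      have h4 : pt (1) (1) (1) ∉ Ureal 4 := by
        rw [mU4]; rintro ⟨u, v⟩; simp only [pt0, pt1, pt2] at u v; linarith
      have h5 : pt (1) (1) (1) ∈ Ureal 5 := by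
        rw [mU5]; constructor <;> (simp only [pt0, pt1, pt2]; norm_num)
      intro i; fin_cases i
      · exact iff_of_false (by decide) h0
      · exact iff_of_false (by decide) h1
      · exact iff_of_false (by decide) h2
      · exact iff_of_false (by decide) h3
      · exact iff_of_false (by decide) h4
      · exact iff_of_true (by decide) h5
  · refine ⟨pt (0) (0) (0), ?_⟩
    have h0 : pt (0) (0) (0) ∉ Ureal 0 := by
      rw [mU0]; rintro ⟨u, v⟩; simp only [pt0, pt1, pt2] at u v; linarith
    have h1 : pt (0) (0) (0) ∉ Ureal 1 := by
      rw [mU1]; rintro ⟨u, v⟩; simp only [pt0, pt1, pt2] at u v; linarith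
    have h2 : pt (0) (0) (0) ∉ Ureal 2 := by
      rw [mU2]; rintro ⟨u, v⟩; simp only [pt0, pt1, pt2] at u v; linarith
    have h3 : pt (0) (0) (0) ∉ Ureal 3 := by
      rw [mU3]; rintro ⟨u, v⟩; simp only [pt0, pt1, pt2] at u v; linarith
    have h4 : pt (0) (0) (0) ∉ Ureal 4 := by
      rw [mU4]; rintro ⟨u, v⟩; simp only [pt0, pt1, pt2] at u v; linarith
    have h5 : pt (0) (0) (0) ∉ Ureal 5 := by
      rw [mU5]; rintro ⟨u, v⟩; simp only [pt0, pt1, pt2] at u v; linarith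
    intro i; fin_cases i
    · exact iff_of_false (by decide) h0
    · exact iff_of_false (by decide) h1
    · exact iff_of_false (by decide) h2
    · exact iff_of_false (by decide) h3
    · exact iff_of_false (by decide) h4
    · exact iff_of_false (by decide) h5

theorem pos_R3 : HasOpenRealization (2*3) (Tcode 3) 3 := by
  refine ⟨Ureal, Ureal_convex, Ureal_open, ?_⟩
  apply Set.eq_of_subset_of_subset
  · rintro σ ⟨x, hx⟩
    exact forward σ x hx
  · exact backward

end Pos

/-- `T 3` has an open convex realization in `ℝ^3` but none in `ℝ^2`. -/
theorem Tcode_three : HasOpenRealization (2*3) (Tcode 3) 3 ∧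
    ¬ HasOpenRealization (2*3) (Tcode 3) 2 := by
  exact ⟨pos_R3, no_R2⟩
end

section
/- Let p_1, p_2, p_3, p_4, p_5 be five points in ℝ^3 in general position (no four of the points lie in a common affine plane). Then there is a partition of {1,…,5} into a three-element set {a,b,c} and a two-element set {s,t}, a nonzero linear functional f : ℝ^3 → ℝ, and a constant r ∈ ℝ, such that f(p_a) = f(p_b) = f(p_c) = r, f(p_s) > r, and f(p_t) < r. That is, some plane through three of the points strictly separates the remaining two. -/
open scoped RealInnerProductSpace

set_option maxHeartbeats 1000000 in
/-- Given five points in general position in `ℝ^3` (every four affinely independent),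
some plane through three of the points strictly separates the remaining two. -/
theorem five_points_separating_plane (p : Fin 5 → EuclideanSpace ℝ (Fin 3))
    (hgen : ∀ s : Finset (Fin 5), s.card = 4 →
      AffineIndependent ℝ (fun i : s => p i)) :
    ∃ a b c s t : Fin 5, ({a, b, c, s, t} : Finset (Fin 5)) = Finset.univ ∧
      ∃ f : EuclideanSpace ℝ (Fin 3) →ₗ[ℝ] ℝ, f ≠ 0 ∧
        ∃ r : ℝ, f (p a) = r ∧ f (p b) = r ∧ f (p c) = r ∧
          r < f (p s) ∧ f (p t) < r := by
  classical
  -- Key consequence of general position: any affine relation supported on 4 points is trivial.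
  have key : ∀ s : Finset (Fin 5), s.card = 4 → ∀ w : Fin 5 → ℝ,
      (∑ i ∈ s, w i) = 0 → (∑ i ∈ s, w i • p i) = 0 → ∀ i ∈ s, w i = 0 := by
    intro s hs w h0 h1 i hi
    have h := affineIndependent_iff.mp (hgen s hs) Finset.univ (fun j => w j)
      (by rw [Finset.sum_coe_sort s w] at *; exact h0)
      (by rw [Finset.sum_coe_sort s (fun i => w i • p i)] at *; exact h1)
      ⟨i, hi⟩ (Finset.mem_univ _)
    exact h
  -- Five points in ℝ³ are affinely dependent.
  have hnot : ¬ AffineIndependent ℝ p := by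
    intro h
    have h5 := h.card_le_finrank_succ
    have hle : Module.finrank ℝ (vectorSpan ℝ (Set.range p)) ≤ 3 := by
      have := Submodule.finrank_le (vectorSpan ℝ (Set.range p))
      simpa using this
    simp [Fintype.card_fin] at h5
    omega
  rw [affineIndependent_iff] at hnot
  push_neg at hnot
  obtain ⟨sR, wR, hw0, hw1, j, hj, hjne⟩ := hnot
  set w : Fin 5 → ℝ := fun i => if i ∈ sR then wR i else 0 with hw
  have hsum0 : (∑ i, w i) = 0 := by
    simp only [hw]
    rw [Finset.sum_ite_mem, Finset.univ_inter]; exact hw0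
  have hcomb0 : (∑ i, w i • p i) = 0 := by
    simp only [hw, ite_smul, zero_smul]
    rw [Finset.sum_ite_mem, Finset.univ_inter]; exact hw1
  have hwj : w j ≠ 0 := by simp [hw, hj, hjne]
  -- All weights are nonzero.
  have hne : ∀ i, w i ≠ 0 := by
    intro i hi
    have hcard : (Finset.univ.erase i).card = 4 := by
      simp [Finset.card_erase_of_mem]
    have h0' : (∑ k ∈ Finset.univ.erase i, w k) = 0 := by
      rw [Finset.sum_erase _ hi]; exact hsum0
    have h1' : (∑ k ∈ Finset.univ.erase i, w k • p k) = 0 := by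
      rw [Finset.sum_erase]; exact hcomb0
      rw [hi, zero_smul]
    have hall := key _ hcard w h0' h1'
    rcases eq_or_ne j i with rfl | hji
    · exact hwj hi
    · exact hwj (hall j (Finset.mem_erase.mpr ⟨hji, Finset.mem_univ _⟩))
  -- Two indices with weights of the same sign.
  obtain ⟨s, t, hst, hpos⟩ : ∃ s t : Fin 5, s ≠ t ∧ 0 < w s * w t := by
    by_cases h01 : 0 < w 0 * w 1
    · exact ⟨0, 1, by decide, h01⟩
    by_cases h02 : 0 < w 0 * w 2
    · exact ⟨0, 2, by decide, h02⟩
    refine ⟨1, 2, by decide, ?_⟩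
    have a1 : w 0 * w 1 < 0 :=
      lt_of_le_of_ne (not_lt.mp h01) (mul_ne_zero (hne 0) (hne 1))
    have a2 : w 0 * w 2 < 0 :=
      lt_of_le_of_ne (not_lt.mp h02) (mul_ne_zero (hne 0) (hne 2))
    have h00 : 0 < w 0 * w 0 := mul_self_pos.mpr (hne 0)
    nlinarith [mul_pos_of_neg_of_neg a1 a2]
  -- Get the complementary triple.
  have hcardc : ({s, t}ᶜ : Finset (Fin 5)).card = 3 := by
    rw [Finset.card_compl, Finset.card_insert_of_notMem (by simpa using hst),
      Finset.card_singleton]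
    rfl
  obtain ⟨a, b, c, hab, hac, hbc, habc⟩ := Finset.card_eq_three.mp hcardc
  have ha : a ∈ ({s, t}ᶜ : Finset (Fin 5)) := by rw [habc]; simp
  have hb : b ∈ ({s, t}ᶜ : Finset (Fin 5)) := by rw [habc]; simp
  have hc : c ∈ ({s, t}ᶜ : Finset (Fin 5)) := by rw [habc]; simp
  simp only [Finset.mem_compl, Finset.mem_insert, Finset.mem_singleton, not_or] at ha hb hc
  obtain ⟨has, hat⟩ := ha
  obtain ⟨hbs, hbt⟩ := hb
  obtain ⟨hcs, hct⟩ := hc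
  have huniv : ({a, b, c, s, t} : Finset (Fin 5)) = Finset.univ := by
    apply Finset.eq_univ_of_card
    rw [Finset.card_insert_of_notMem (by simp [hab, hac, has, hat]),
      Finset.card_insert_of_notMem (by simp [hbc, hbs, hbt]),
      Finset.card_insert_of_notMem (by simp [hcs, hct]),
      Finset.card_insert_of_notMem (by simpa using hst), Finset.card_singleton]
    rfl
  -- The plane through a, b, c.
  set v1 : EuclideanSpace ℝ (Fin 3) := p b - p a with hv1
  set v2 : EuclideanSpace ℝ (Fin 3) := p c - p a with hv2
  set V : Submodule ℝ (EuclideanSpace ℝ (Fin 3)) := Submodule.span ℝ {v1, v2} with hV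
  -- The three difference vectors from a to b, c, x are linearly independent for x ∈ {s,t},
  -- in fact we only need: they span everything or rather orthogonality forces u = 0.
  have indep : ∀ x : Fin 5, x ≠ a → x ≠ b → x ≠ c →
      LinearIndependent ℝ ![v1, v2, p x - p a] := by
    intro x hxa hxb hxc
    rw [Fintype.linearIndependent_iff]
    intro g hg
    set w' : Fin 5 → ℝ := fun j =>
      if j = b then g 0 else if j = c then g 1 else if j = x then g 2
      else if j = a then -(g 0 + g 1 + g 2) else 0 with hw'
    have hcard4 : ({a, b, c, x} : Finset (Fin 5)).card = 4 := by
      rw [Finset.card_insert_of_notMem (by simp [hab, hac, Ne.symm hxa]),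
        Finset.card_insert_of_notMem (by simp [hbc, Ne.symm hxb]),
        Finset.card_insert_of_notMem (by simp [Ne.symm hxc]), Finset.card_singleton]
    have hmem : a ∉ ({b, c, x} : Finset (Fin 5)) := by simp [hab, hac, Ne.symm hxa]
    have hmem2 : b ∉ ({c, x} : Finset (Fin 5)) := by simp [hbc, Ne.symm hxb]
    have hmem3 : c ∉ ({x} : Finset (Fin 5)) := by simp [Ne.symm hxc]
    have hexp : ∀ f : Fin 5 → EuclideanSpace ℝ (Fin 3),
        (∑ i ∈ ({a, b, c, x} : Finset (Fin 5)), f i) = f a + f b + f c + f x := by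
      intro f
      rw [Finset.sum_insert hmem, Finset.sum_insert hmem2, Finset.sum_insert hmem3,
        Finset.sum_singleton]
      abel
    have hexp' : (∑ i ∈ ({a, b, c, x} : Finset (Fin 5)), w' i) = w' a + w' b + w' c + w' x := by
      rw [Finset.sum_insert hmem, Finset.sum_insert hmem2, Finset.sum_insert hmem3,
        Finset.sum_singleton]
      ring
    have hwa : w' a = -(g 0 + g 1 + g 2) := by
      simp [hw', hab, hac, hxa, Ne.symm hxa]
    have hwb : w' b = g 0 := by simp [hw']
    have hwc : w' c = g 1 := by simp [hw', hbc, Ne.symm hbc]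
    have hwx : w' x = g 2 := by simp [hw', Ne.symm hxb, Ne.symm hxc, hxb, hxc]
    have h0' : (∑ i ∈ ({a, b, c, x} : Finset (Fin 5)), w' i) = 0 := by
      rw [hexp', hwa, hwb, hwc, hwx]; ring
    have h1' : (∑ i ∈ ({a, b, c, x} : Finset (Fin 5)), w' i • p i) = 0 := by
      rw [hexp (fun i => w' i • p i), hwa, hwb, hwc, hwx]
      have hg' : g 0 • v1 + g 1 • v2 + g 2 • (p x - p a) = 0 := by
        have := hg
        simpa [Fin.sum_univ_three] using this
      rw [hv1, hv2] at hg'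
      have : (-(g 0 + g 1 + g 2)) • p a + g 0 • p b + g 1 • p c + g 2 • p x
          = g 0 • (p b - p a) + g 1 • (p c - p a) + g 2 • (p x - p a) := by
        simp only [smul_sub, neg_smul, add_smul]
        abel
      rw [this, hg']
    have hall := key _ hcard4 w' h0' h1'
    intro i
    fin_cases i
    · simpa [hwb] using hall b (by simp)
    · simpa [hwc] using hall c (by simp)
    · simpa [hwx] using hall x (by simp)
  -- Choose a normal vector.
  have hVne : V ≠ ⊤ := by
    intro hV'
    have hind := indep s (Ne.symm has) (Ne.symm hbs) (Ne.symm hcs)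
    have : (p s - p a) ∈ V := hV' ▸ Submodule.mem_top
    rw [hV, Submodule.mem_span_pair] at this
    obtain ⟨x, y, hxy⟩ := this
    have := Fintype.linearIndependent_iff.mp hind ![x, y, -1]
      (by
        simp only [Fin.sum_univ_three, Matrix.cons_val_zero, Matrix.cons_val_one,
          Matrix.head_cons, Matrix.cons_val_two, Matrix.tail_cons, neg_one_smul]
        rw [← hxy]; abel) 2
    change (-1 : ℝ) = 0 at this
    norm_num at this
  obtain ⟨u, huV, hu0⟩ : ∃ u, u ∈ Vᗮ ∧ u ≠ 0 := by
    by_contra h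
    push_neg at h
    have : Vᗮ = ⊥ := by
      rw [Submodule.eq_bot_iff]
      intro y hy
      by_contra hy0
      exact hy0 (h y hy)
    exact hVne (Submodule.orthogonal_eq_bot_iff.mp this)
  set f : EuclideanSpace ℝ (Fin 3) →ₗ[ℝ] ℝ := (innerSL ℝ u).toLinearMap with hf
  have hfeval : ∀ x, f x = ⟪u, x⟫ := fun x => rfl
  have hfne : f ≠ 0 := by
    intro h
    have : f u = 0 := by rw [h]; rfl
    rw [hfeval, inner_self_eq_zero] at this
    exact hu0 this
  set r : ℝ := f (p a) with hr
  have hv1V : v1 ∈ V := Submodule.subset_span (by simp)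
  have hv2V : v2 ∈ V := Submodule.subset_span (by simp)
  have hu1 : ⟪u, v1⟫ = 0 := by
    rw [real_inner_comm]; exact Submodule.inner_right_of_mem_orthogonal hv1V huV
  have hu2 : ⟪u, v2⟫ = 0 := by
    rw [real_inner_comm]; exact Submodule.inner_right_of_mem_orthogonal hv2V huV
  have hfb : f (p b) = r := by
    rw [hr, hfeval, hfeval, ← sub_eq_zero, ← inner_sub_right]
    exact hu1
  have hfc : f (p c) = r := by
    rw [hr, hfeval, hfeval, ← sub_eq_zero, ← inner_sub_right]
    exact hu2
  -- f separates strictly: f (p x) ≠ r for x = s, t.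
  have hfx : ∀ x : Fin 5, x ≠ a → x ≠ b → x ≠ c → f (p x) ≠ r := by
    intro x hxa hxb hxc hfxr
    have hux : ⟪u, p x - p a⟫ = 0 := by
      rw [inner_sub_right, ← hfeval, ← hfeval, hfxr, hr, sub_self]
    have hind := indep x hxa hxb hxc
    have hspan : Submodule.span ℝ (Set.range ![v1, v2, p x - p a]) = ⊤ :=
      hind.span_eq_top_of_card_eq_finrank (by simp)
    have huo : u ∈ (Submodule.span ℝ (Set.range ![v1, v2, p x - p a]))ᗮ := by
      rw [Submodule.mem_orthogonal]
      intro y hy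
      refine Submodule.span_induction ?_ ?_ ?_ ?_ hy
      · rintro z ⟨i, rfl⟩
        fin_cases i
        · show ⟪v1, u⟫ = 0
          rw [real_inner_comm]; exact hu1
        · show ⟪v2, u⟫ = 0
          rw [real_inner_comm]; exact hu2
        · show ⟪p x - p a, u⟫ = 0
          rw [real_inner_comm]; exact hux
      · simp
      · intro z z' _ _ h1 h2; rw [inner_add_left, h1, h2, add_zero]
      · intro m z _ h1; rw [inner_smul_left, h1, mul_zero]
    rw [hspan, Submodule.top_orthogonal_eq_bot, Submodule.mem_bot] at huo
    exact hu0 huo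
  have hfs : f (p s) ≠ r := hfx s (Ne.symm has) (Ne.symm hbs) (Ne.symm hcs)
  have hft : f (p t) ≠ r := hfx t (Ne.symm hat) (Ne.symm hbt) (Ne.symm hct)
  -- The main relation.
  have hnotma : a ∉ ({b, c, s, t} : Finset (Fin 5)) := by simp [hab, hac, has, hat]
  have hnotmb : b ∉ ({c, s, t} : Finset (Fin 5)) := by simp [hbc, hbs, hbt]
  have hnotmc : c ∉ ({s, t} : Finset (Fin 5)) := by simp [hcs, hct]
  have hnotms : s ∉ ({t} : Finset (Fin 5)) := by simpa using hst
  have hsum5 : w a + w b + w c + w s + w t = 0 := by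
    rw [← huniv, Finset.sum_insert hnotma, Finset.sum_insert hnotmb,
      Finset.sum_insert hnotmc, Finset.sum_insert hnotms, Finset.sum_singleton] at hsum0
    linarith
  have hcomb5 : w a • p a + w b • p b + w c • p c + w s • p s + w t • p t = 0 := by
    rw [← huniv, Finset.sum_insert hnotma, Finset.sum_insert hnotmb,
      Finset.sum_insert hnotmc, Finset.sum_insert hnotms, Finset.sum_singleton] at hcomb0
    rw [← hcomb0]; abel
  have hfcomb : w a * r + w b * r + w c * r + w s * f (p s) + w t * f (p t) = 0 := by
    have := congrArg f hcomb5
    simpa [map_add, map_smul, hfb, hfc, ← hr] using this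
  have hrel : w s * (f (p s) - r) + w t * (f (p t) - r) = 0 := by
    linear_combination hfcomb - r * hsum5
  -- Opposite signs.
  have h1 : w s * w t * ((f (p s) - r) * (f (p t) - r)) + (w t * (f (p t) - r))^2 = 0 := by
    linear_combination (w t * (f (p t) - r)) * hrel
  have hprodle : (f (p s) - r) * (f (p t) - r) ≤ 0 := by
    nlinarith [sq_nonneg (w t * (f (p t) - r))]
  have hprodneg : (f (p s) - r) * (f (p t) - r) < 0 :=
    lt_of_le_of_ne hprodle (mul_ne_zero (sub_ne_zero.mpr hfs) (sub_ne_zero.mpr hft))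
  rcases lt_or_gt_of_ne (sub_ne_zero.mpr hfs) with h | h
  · -- f (p s) < r, so f (p t) > r : use (t, s)
    have ht' : 0 < f (p t) - r := by nlinarith
    refine ⟨a, b, c, t, s, ?_, f, hfne, r, rfl, hfb, hfc, by linarith, by linarith⟩
    rw [show ({a, b, c, t, s} : Finset (Fin 5)) = {a, b, c, s, t} from by
      rw [Finset.pair_comm t s]]
    exact huniv
  · have ht' : f (p t) - r < 0 := by nlinarith
    refine ⟨a, b, c, s, t, huniv, f, hfne, r, rfl, hfb, hfc, by linarith, by linarith⟩
end
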